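/- arXiv:2203.01691 — 7 statements merged into one kernel-verified Lean document; each statement's English description precedes it below -/
import Mathlib

section
/- Let O be an integral domain, let v : O → ℤ ∪ {∞} be a pseudo-valuation, and let S_v be the multiplicatively closed set of nonzero v-stable elements of O. Then v extends to the ring of fractions S_v^{-1}O: the map w given by w(a/s) = v(a) − v(s) is well defined (independent of the representation of the fraction), satisfies w(a/1) = v(a) for all a ∈ O, and satisfies the axioms of a pseudo-valuation on S_v^{-1}O (with the axioms read with values in ℤ ∪ {∞}). -/
/-- Let `O` be an integral domain, `v : O → ℤ ∪ {∞}` a pseudo-valuation and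
`S_v` the multiplicatively closed set of nonzero `v`-stable elements of `O`.  Then `v`
extends to the ring of fractions `S_v⁻¹O`: there is a map `w` with `w (a/s) = v a - v s`
(well defined, i.e. independent of the representation of the fraction; since `v s ≠ ∞`, this
equation is expressed as `w (a/s) + v s = v a`), with `w (a/1) = v a` for all `a ∈ O`, and
`w` satisfies the axioms of a pseudo-valuation on `S_v⁻¹O`. -/
theorem statement5 {O : Type*} [CommRing O] [IsDomain O] (v : O → WithTop ℤ)
    (h1 : ∀ a : O, v a = ⊤ ↔ a = 0)
    (h2 : v (-1) = 0)
    (h3 : ∀ a b : O, v a + v b ≤ v (a * b))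
    (h4 : ∀ a b : O, min (v a) (v b) ≤ v (a + b))
    (S : Submonoid O)
    (hS : ∀ a : O, a ∈ S ↔ a ≠ 0 ∧ ∀ b : O, v (a * b) = v a + v b) :
    ∃ w : Localization S → WithTop ℤ,
      (∀ (a : O) (s : S), w (Localization.mk a s) + v (s : O) = v a) ∧
      (∀ a : O, w (algebraMap O (Localization S) a) = v a) ∧
      (∀ r : Localization S, w r = ⊤ ↔ r = 0) ∧
      w (-1) = 0 ∧
      (∀ r r' : Localization S, w r + w r' ≤ w (r * r')) ∧
      (∀ r r' : Localization S, min (w r) (w r') ≤ w (r + r')) := by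
  classical
  -- integer value of v on stable elements
  set n : O → ℤ := fun s => (v s).untopD 0 with hn
  have hSne : ∀ s : S, (s : O) ≠ 0 := fun s => ((hS s).mp s.2).1
  have hstab : ∀ (s : S) (b : O), v ((s : O) * b) = v (s : O) + v b :=
    fun s => ((hS s).mp s.2).2
  have hSnetop : ∀ s : S, v (s : O) ≠ ⊤ := fun s h => hSne s ((h1 _).mp h)
  have hcoe : ∀ s : S, ((n s : ℤ) : WithTop ℤ) = v (s : O) := by
    intro s
    obtain ⟨c, hc⟩ := WithTop.ne_top_iff_exists.mp (hSnetop s)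
    simp only [hn, ← hc, WithTop.untopD_coe]
  have addneg' : ∀ (x : WithTop ℤ) (c : ℤ), x + ((-c : ℤ) : WithTop ℤ) + (c : WithTop ℤ) = x := by
    intro x c
    rw [add_assoc, ← WithTop.coe_add, neg_add_cancel, WithTop.coe_zero, add_zero]
  have h1O : v (1 : O) = 0 := by
    have hst := hstab 1 1
    simp only [Submonoid.coe_one, mul_one] at hst
    have hne : v (1 : O) ≠ ⊤ := fun h => one_ne_zero ((h1 _).mp h)
    obtain ⟨c, hc⟩ := WithTop.ne_top_iff_exists.mp hne
    rw [← hc] at hst ⊢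
    rw [← WithTop.coe_add, WithTop.coe_eq_coe] at hst
    norm_cast
    omega
  have hone : n (1 : S) = 0 := by
    have := hcoe 1
    rw [Submonoid.coe_one, h1O] at this
    exact_mod_cast this
  -- the definition of w
  set f : O → S → WithTop ℤ := fun a s => v a + ((-(n s) : ℤ) : WithTop ℤ) with hf
  have hwd : ∀ {a c : O} {b d : S}, Localization.r S (a, b) (c, d) → f a b = f c d := by
    intro a c b d h
    obtain ⟨e, he⟩ := Localization.r_iff_exists.mp h
    simp only at he
    have hkey : v (d : O) + v a = v (b : O) + v c := by
      have hcg := congrArg v he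
      rw [hstab e, hstab e, hstab d, hstab b] at hcg
      exact WithTop.add_left_cancel (hSnetop e) hcg
    have key2 : v a + ((n d : ℤ) : WithTop ℤ) = v c + ((n b : ℤ) : WithTop ℤ) := by
      rw [hcoe d, hcoe b, add_comm (v a), add_comm (v c)]; exact hkey
    have key3 : v a + ((n d : ℤ) : WithTop ℤ) + ((-(n d) - n b : ℤ) : WithTop ℤ)
        = v c + ((n b : ℤ) : WithTop ℤ) + ((-(n d) - n b : ℤ) : WithTop ℤ) := by rw [key2]
    simp only [hf]
    calc v a + ((-(n b) : ℤ) : WithTop ℤ)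
        = v a + ((n d : ℤ) : WithTop ℤ) + ((-(n d) - n b : ℤ) : WithTop ℤ) := by
          rw [add_assoc, ← WithTop.coe_add]
          ring_nf
      _ = v c + ((n b : ℤ) : WithTop ℤ) + ((-(n d) - n b : ℤ) : WithTop ℤ) := key3
      _ = v c + ((-(n d) : ℤ) : WithTop ℤ) := by
          rw [add_assoc, ← WithTop.coe_add]
          ring_nf
  set w : Localization S → WithTop ℤ := fun r => Localization.liftOn r f hwd with hw
  have hwmk : ∀ (a : O) (s : S), w (Localization.mk a s)
      = v a + ((-(n s) : ℤ) : WithTop ℤ) := by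
    intro a s
    rw [hw]
    exact Localization.liftOn_mk f hwd a s
  have hmul : ∀ (s t : S), n ((s * t : S) : O) = n (s : O) + n (t : O) := by
    intro s t
    have hv : v ((s : O) * (t : O)) = ((n s + n t : ℤ) : WithTop ℤ) := by
      rw [hstab s, ← hcoe s, ← hcoe t, WithTop.coe_add]
    have h' := (hcoe (s * t)).symm
    rw [Submonoid.coe_mul, hv] at h'
    exact_mod_cast h'.symm
  refine ⟨w, ?_, ?_, ?_, ?_, ?_, ?_⟩
  · intro a s
    rw [hwmk, ← hcoe s, addneg']
  · intro a
    rw [← Localization.mk_one_eq_algebraMap, hwmk, hone, neg_zero, WithTop.coe_zero, add_zero]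
  · intro r
    induction r using Localization.ind with
    | _ p =>
      obtain ⟨a, s⟩ := p
      rw [hwmk]
      constructor
      · intro h
        rcases WithTop.add_eq_top.mp h with h | h
        · rw [(h1 a).mp h, Localization.mk_zero]
        · exact absurd h (WithTop.coe_ne_top)
      · intro h
        have ha : a = 0 := by
          rw [show (0 : Localization S) = Localization.mk 0 1 from (Localization.mk_zero 1).symm,
            Localization.mk_eq_mk_iff, Localization.r_iff_exists] at h
          obtain ⟨c, hc⟩ := h
          simp only [Submonoid.coe_one, one_mul, mul_zero] at hc
          exact (mul_eq_zero.mp hc).resolve_left (hSne c)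
        rw [ha, (h1 0).mpr rfl, WithTop.top_add]
  · have hm1 : (-1 : Localization S) = Localization.mk (-1) 1 := by
      rw [← Localization.mk_one, ← Localization.neg_mk]
    rw [hm1, hwmk, h2, hone, neg_zero, WithTop.coe_zero, add_zero]
  · intro r r'
    induction r using Localization.ind with
    | _ p =>
      induction r' using Localization.ind with
      | _ q =>
        obtain ⟨a, s⟩ := p
        obtain ⟨b, t⟩ := q
        simp only
        rw [Localization.mk_mul, hwmk, hwmk, hwmk, hmul]
        calc v a + ((-(n s) : ℤ) : WithTop ℤ) + (v b + ((-(n t) : ℤ) : WithTop ℤ))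
            = v a + v b + ((-(n s + n t) : ℤ) : WithTop ℤ) := by
              rw [add_assoc, add_comm ((((-(n s) : ℤ)) : WithTop ℤ)), add_assoc, ← WithTop.coe_add,
                ← add_assoc]
              ring_nf
          _ ≤ v (a * b) + ((-(n s + n t) : ℤ) : WithTop ℤ) := add_le_add_left (h3 a b) _
  · intro r r'
    induction r using Localization.ind with
    | _ p =>
      induction r' using Localization.ind with
      | _ q =>
        obtain ⟨a, s⟩ := p
        obtain ⟨b, t⟩ := q
        simp only
        rw [Localization.add_mk, hwmk, hwmk, hwmk, hmul]
        rw [← WithTop.add_le_add_iff_right (WithTop.coe_ne_top (a := (n s + n t : ℤ)))]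
        rw [addneg']
        have hminq : min (v a + ((-(n s) : ℤ) : WithTop ℤ)) (v b + ((-(n t) : ℤ) : WithTop ℤ))
            + ((n s + n t : ℤ) : WithTop ℤ)
            = min (v a + ((n t : ℤ) : WithTop ℤ)) (v b + ((n s : ℤ) : WithTop ℤ)) := by
          rw [← min_add_add_right]
          congr 1
          · rw [add_assoc, ← WithTop.coe_add]; ring_nf
          · rw [add_assoc, ← WithTop.coe_add]; ring_nf
        rw [hminq]
        have hsb : v ((s : O) * b) = v b + ((n s : ℤ) : WithTop ℤ) := by
          rw [hstab s, ← hcoe s, add_comm]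
        have hta : v ((t : O) * a) = v a + ((n t : ℤ) : WithTop ℤ) := by
          rw [hstab t, ← hcoe t, add_comm]
        calc min (v a + ((n t : ℤ) : WithTop ℤ)) (v b + ((n s : ℤ) : WithTop ℤ))
            = min (v ((s:O) * b)) (v ((t:O) * a)) := by rw [hsb, hta, min_comm]
          _ ≤ v ((s:O) * b + (t:O) * a) := h4 _ _
end

section
/- Let N > 1 be an integer and let a be a nonzero integer with k = ord_N(a). Then a is stable for the pseudo-valuation ord_N on ℤ, i.e., ord_N(ab) = ord_N(a) + ord_N(b) for every integer b, if and only if gcd(a / N^k, N) = 1 (equivalently, if and only if the image of a / N^k in ℤ/Nℤ is a unit). -/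
/-- The `N`-adic pseudo-valuation on `ℤ`: `ordN N a = k` if `N^k ∣ a` and `N^(k+1) ∤ a`,
and `ordN N 0 = ∞`.  (For `N > 1` this is the `emultiplicity` of `N` in `a`.) -/
noncomputable def ordN (N : ℕ) (a : ℤ) : ℕ∞ := emultiplicity (N : ℤ) a

/-- Let `N > 1` and let `a` be a nonzero integer with `k = ord_N(a)`
(i.e. `N^k ∣ a` and `N^(k+1) ∤ a`).  Then `a` is stable for the pseudo-valuation `ord_N`
on `ℤ`, i.e. `ord_N (a*b) = ord_N a + ord_N b` for every integer `b`, if and only if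
`gcd (a / N^k, N) = 1`; equivalently, if and only if the image of `a / N^k` in `ℤ/Nℤ`
is a unit. -/
theorem statement6 (N : ℕ) (hN : 1 < N) (a : ℤ) (ha : a ≠ 0)
    (k : ℕ) (hk : (N : ℤ) ^ k ∣ a ∧ ¬ (N : ℤ) ^ (k + 1) ∣ a) :
    ((∀ b : ℤ, ordN N (a * b) = ordN N a + ordN N b) ↔
        Int.gcd (a / (N : ℤ) ^ k) N = 1) ∧
      ((∀ b : ℤ, ordN N (a * b) = ordN N a + ordN N b) ↔
        IsUnit ((a / (N : ℤ) ^ k : ℤ) : ZMod N)) := by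
  have hN0 : (N : ℤ) ≠ 0 := by positivity
  have hNk0 : ((N : ℤ) ^ k) ≠ 0 := pow_ne_zero _ hN0
  obtain ⟨⟨a', rfl⟩, hk2⟩ := hk
  have hdiv : (N : ℤ) ^ k * a' / (N : ℤ) ^ k = a' := Int.mul_ediv_cancel_left _ hNk0
  rw [hdiv]
  have hNa' : ¬ (N : ℤ) ∣ a' := by
    rintro ⟨c, rfl⟩
    exact hk2 ⟨c, by ring⟩
  have horda : ordN N ((N:ℤ)^k * a') = (k : ℕ∞) :=
    emultiplicity_eq_coe.mpr ⟨⟨a', rfl⟩, hk2⟩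
  have main : (∀ b : ℤ, ordN N ((N:ℤ)^k * a' * b) = ordN N ((N:ℤ)^k * a') + ordN N b) ↔
      Int.gcd a' N = 1 := by
    constructor
    · intro hstab
      by_contra hg
      have hgN : (Int.gcd a' N : ℤ) ∣ (N : ℤ) := Int.gcd_dvd_right _ _
      have hga : (Int.gcd a' N : ℤ) ∣ a' := Int.gcd_dvd_left _ _
      set d := Int.gcd a' N with hd
      have hd0 : d ≠ 0 := by
        intro h0
        rw [h0] at hgN
        exact hN0 (by exact_mod_cast (zero_dvd_iff.mp (by exact_mod_cast hgN)))
      have hd2 : 2 ≤ d := by omega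
      have hdN : d ∣ N := by exact_mod_cast hgN
      obtain ⟨e, he⟩ := hdN
      have he0 : e ≠ 0 := by rintro rfl; simp at he; omega
      have heN : e < N := by
        rcases Nat.lt_or_ge e N with h | h
        · exact h
        · exfalso; nlinarith [Nat.le_of_dvd (by omega) (⟨e, he⟩ : d ∣ N)]
      have hordE : ordN N (e : ℤ) = 0 := by
        rw [ordN, ← Nat.cast_zero, emultiplicity_eq_coe]
        refine ⟨one_dvd _, ?_⟩
        rw [pow_one]
        intro hdvd
        have : N ∣ e := by exact_mod_cast hdvd
        exact absurd (Nat.le_of_dvd (Nat.pos_of_ne_zero he0) this) (by omega)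
      have hstabE := hstab (e : ℤ)
      rw [horda, hordE, add_zero] at hstabE
      have hdvd : (N : ℤ) ^ (k + 1) ∣ (N:ℤ)^k * a' * (e : ℤ) := by
        obtain ⟨c, hc⟩ := hga
        refine ⟨c, ?_⟩
        rw [hc]
        push_cast [he]
        ring
      exact (emultiplicity_eq_coe.mp hstabE).2 hdvd
    · intro hg b
      rcases eq_or_ne b 0 with rfl | hb
      · simp [ordN, emultiplicity_zero]
      · have hfin : FiniteMultiplicity (N : ℤ) b :=
          Int.finiteMultiplicity_iff.mpr ⟨by simp only [Int.natAbs_natCast]; omega, hb⟩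
        obtain ⟨m, hmd, hmnd⟩ : ∃ m : ℕ, (N:ℤ)^m ∣ b ∧ ¬(N:ℤ)^(m+1) ∣ b :=
          ⟨_, hfin.multiplicity_eq_iff.mp rfl⟩
        obtain ⟨b', rfl⟩ := hmd
        have hNb' : ¬ (N : ℤ) ∣ b' := by
          rintro ⟨c, rfl⟩
          exact hmnd ⟨c, by ring⟩
        have hordb : ordN N ((N:ℤ)^m * b') = (m : ℕ∞) :=
          emultiplicity_eq_coe.mpr ⟨⟨b', rfl⟩, hmnd⟩
        rw [horda, hordb, ordN, ← Nat.cast_add, emultiplicity_eq_coe]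
        constructor
        · exact ⟨a' * b', by ring⟩
        · rintro ⟨c, hc⟩
          have : (N : ℤ) ∣ a' * b' := by
            refine ⟨c, ?_⟩
            have h2 : (N:ℤ)^(k+m) * (a' * b') = (N:ℤ)^(k+m) * ((N:ℤ) * c) := by
              have h3 : (N:ℤ)^(k+m) * (a' * b') = (N:ℤ)^k * a' * ((N:ℤ)^m * b') := by ring
              rw [h3, hc]; ring
            exact mul_left_cancel₀ (pow_ne_zero _ hN0) h2
          rw [mul_comm] at this
          have : (N : ℤ) ∣ b' := Int.dvd_of_dvd_mul_left_of_gcd_one this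
            (by rwa [Int.gcd_comm])
          exact hNb' this
  have unit_iff : Int.gcd a' N = 1 ↔ IsUnit ((a' : ℤ) : ZMod N) := by
    have : IsUnit ((a' : ℤ) : ZMod N) ↔ IsUnit ((a'.natAbs : ℕ) : ZMod N) := by
      rcases Int.natAbs_eq a' with h | h
      · conv_lhs => rw [h]
        rw [Int.cast_natCast]
      · conv_lhs => rw [h]
        rw [Int.cast_neg, Int.cast_natCast, IsUnit.neg_iff]
    rw [this, ZMod.isUnit_iff_coprime]
    unfold Int.gcd Nat.Coprime
    rfl
  exact ⟨main, main.trans unit_iff⟩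
end

section
/- Let N > 1 be an integer and let f ∈ ℤ[x] be a nonzero N-robust polynomial. Then for every prime factor p of N one has ord_p(f) = ord_p(N) · ord_N(f), where ord_p(f) denotes the minimum of the p-adic valuations of the coefficients of f. -/
open Polynomial

/-- The natural-number valued `N`-adic valuation of a nonzero integer. -/
noncomputable def ordZ (N : ℕ) (a : ℤ) : ℕ := multiplicity (N : ℤ) a

/-- The extension of `ordN` to `ℤ[x]`: the minimum of `ordN` over the coefficients
(infimum over the support; for the zero polynomial this is `∞`). -/
noncomputable def ordPoly (N : ℕ) (f : ℤ[X]) : ℕ∞ :=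
  f.support.inf fun s => ordN N (f.coeff s)

/-- `f ∈ ℤ[x]` is `N`-robust if every nonzero coefficient `a` of `f` satisfies
`gcd (a / N^(ord_N a), N) = 1` (i.e. every nonzero coefficient is `ord_N`-stable). -/
def NRobust (N : ℕ) (f : ℤ[X]) : Prop :=
  ∀ s ∈ f.support, Int.gcd (f.coeff s / (N : ℤ) ^ ordZ N (f.coeff s)) N = 1

lemma key (N : ℕ) (hN : 1 < N) (a : ℤ) (ha : a ≠ 0)
    (hgcd : Int.gcd (a / (N : ℤ) ^ multiplicity (N : ℤ) a) N = 1)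
    (p : ℕ) (hp : p.Prime) (hpN : p ∣ N) :
    emultiplicity (p : ℤ) a = (multiplicity (p : ℤ) (N : ℤ) : ℕ∞) * emultiplicity (N : ℤ) a := by
  have hNu : ¬ IsUnit (N : ℤ) := by
    simp [Int.isUnit_iff]; omega
  have hfin : FiniteMultiplicity (N : ℤ) a := FiniteMultiplicity.of_not_isUnit hNu ha
  set k := multiplicity (N : ℤ) a with hk
  have hdvd : (N : ℤ) ^ k ∣ a := pow_multiplicity_dvd _ _
  set b := a / (N : ℤ) ^ k with hb
  have hab : a = (N : ℤ) ^ k * b := by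
    rw [hb, mul_comm]
    exact (Int.ediv_mul_cancel hdvd).symm
  have hpZ : Prime (p : ℤ) := Nat.prime_iff_prime_int.mp hp
  have hpb : ¬ (p : ℤ) ∣ b := by
    intro h
    have h2 : (p : ℤ) ∣ (N : ℤ) := Int.natCast_dvd_natCast.mpr hpN
    have : (p : ℤ) ∣ Int.gcd b N := Int.dvd_coe_gcd h h2
    rw [hgcd] at this
    exact hp.one_lt.ne' (by exact_mod_cast Int.eq_one_of_dvd_one (by positivity) this)
  have h1 : emultiplicity (p : ℤ) a =
      emultiplicity (p : ℤ) ((N : ℤ) ^ k) + emultiplicity (p : ℤ) b := by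
    rw [hab, emultiplicity_mul hpZ]
  rw [h1, emultiplicity_pow hpZ, emultiplicity_eq_zero.mpr hpb, add_zero,
    hfin.emultiplicity_eq_multiplicity]
  have hpfin : FiniteMultiplicity (p : ℤ) (N : ℤ) :=
    FiniteMultiplicity.of_not_isUnit hpZ.not_unit (by exact_mod_cast (by omega : N ≠ 0))
  rw [hpfin.emultiplicity_eq_multiplicity]
  exact mul_comm _ _


/-- Let `N > 1` and let `f ∈ ℤ[x]` be a nonzero `N`-robust polynomial.
Then for every prime factor `p` of `N` one has `ord_p f = ord_p N · ord_N f`, where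
`ord_p f` denotes the minimum of the `p`-adic valuations of the coefficients of `f`. -/
theorem statement8 (N : ℕ) (hN : 1 < N) (f : ℤ[X]) (hf : f ≠ 0) (hrob : NRobust N f)
    (p : ℕ) (hp : p.Prime) (hpN : p ∣ N) :
    ordPoly p f = ((ordZ p (N : ℤ) : ℕ∞)) * ordPoly N f := by
  have hsupp : f.support.Nonempty := nonempty_support_iff.mpr hf
  set c : ℕ∞ := (ordZ p (N : ℤ) : ℕ∞) with hc
  have hptwise : ∀ s ∈ f.support, ordN p (f.coeff s) = c * ordN N (f.coeff s) := by
    intro s hs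
    exact key N hN _ (mem_support_iff.mp hs) (hrob s hs) p hp hpN
  have hmono : Monotone (fun x : ℕ∞ => c * x) := fun x y h => mul_le_mul_right h c
  rw [ordPoly, ordPoly, ← Finset.inf'_eq_inf hsupp, ← Finset.inf'_eq_inf hsupp,
    Finset.inf'_congr hsupp rfl hptwise]
  exact (map_finset_inf' (OrderHom.mk (fun x : ℕ∞ => c * x) hmono) hsupp
    (fun s => ordN N (f.coeff s))).symm
end

section
/- Let N > 1 be an integer, let f ∈ ℤ[x] be a nonzero N-robust polynomial, and let h ∈ ℤ[x] be nonzero. Then ord_N(fh) = ord_N(f) + ord_N(h) and R₀(fh) = R₀(f) · R₀(h) in (ℤ/Nℤ)[y]. -/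
open Polynomial

/-- The natural-number value of `ordPoly N f` (equal to `ord_N(f)` for `f ≠ 0`). -/
noncomputable def ordPolyNat (N : ℕ) (f : ℤ[X]) : ℕ := WithTop.untopD 0 (ordPoly N f)

/-- The residual polynomial operator of order zero: `R₀(f)` is the reduction modulo `N`
of `f / N^(ord_N f)` (with the variable renamed to `y`), and `R₀(0) = 0`. -/
noncomputable def R0 (N : ℕ) (f : ℤ[X]) : Polynomial (ZMod N) :=
  (f.sum fun s a => C (a / (N : ℤ) ^ ordPolyNat N f) * X ^ s).map
    (Int.castRingHom (ZMod N))

namespace Statement9Aux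

variable {N : ℕ}

lemma nz (hN : 1 < N) : (N : ℤ) ≠ 0 := by
  have : N ≠ 0 := by omega
  exact_mod_cast this

lemma finN (hN : 1 < N) {a : ℤ} (ha : a ≠ 0) : FiniteMultiplicity (N : ℤ) a :=
  Int.finiteMultiplicity_iff.mpr ⟨by simpa using hN.ne', ha⟩

lemma ordPoly_ne_top (hN : 1 < N) {g : ℤ[X]} (hg : g ≠ 0) : ordPoly N g ≠ ⊤ := by
  obtain ⟨s, hs, hinf⟩ := Finset.exists_mem_eq_inf g.support
    (nonempty_support_iff.mpr hg) (fun s => ordN N (g.coeff s))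
  rw [ordPoly, hinf]
  exact finiteMultiplicity_iff_emultiplicity_ne_top.1 (finN hN (mem_support_iff.mp hs))

lemma ordPoly_coe (hN : 1 < N) {g : ℤ[X]} (hg : g ≠ 0) :
    ordPoly N g = (ordPolyNat N g : ℕ∞) := by
  obtain ⟨k, hk⟩ := WithTop.ne_top_iff_exists.mp (ordPoly_ne_top hN hg)
  rw [ordPolyNat, ← hk, WithTop.untopD_coe]
  rfl

lemma pow_dvd_coeff (hN : 1 < N) (g : ℤ[X]) (s : ℕ) :
    (N : ℤ) ^ ordPolyNat N g ∣ g.coeff s := by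
  by_cases hs : s ∈ g.support
  · have hg : g ≠ 0 := fun h0 => by simp [h0] at hs
    apply pow_dvd_of_le_emultiplicity
    calc ((ordPolyNat N g : ℕ∞)) = ordPoly N g := (ordPoly_coe hN hg).symm
      _ ≤ ordN N (g.coeff s) := Finset.inf_le hs
  · rw [notMem_support_iff.mp hs]; exact dvd_zero _

/-- auxiliary: the quotient of `g` by `N^u`, coefficientwise integer division. -/
noncomputable def divP (N : ℕ) (g : ℤ[X]) (u : ℕ) : ℤ[X] :=
  g.sum fun s a => C (a / (N : ℤ) ^ u) * X ^ s

lemma R0_eq (g : ℤ[X]) :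
    R0 N g = (divP N g (ordPolyNat N g)).map (Int.castRingHom (ZMod N)) := rfl

lemma coeff_divP (g : ℤ[X]) (u t : ℕ) :
    (divP N g u).coeff t = g.coeff t / (N : ℤ) ^ u := by
  rw [divP, Polynomial.sum_def]
  simp only [finset_sum_coeff, coeff_C_mul, coeff_X_pow, mul_ite, mul_one, mul_zero]
  rw [Finset.sum_ite_eq g.support t (fun s => g.coeff s / (N : ℤ) ^ u)]
  split_ifs with ht
  · rfl
  · rw [notMem_support_iff.mp ht, Int.zero_ediv]

lemma C_pow_mul_divP (hN : 1 < N) (g : ℤ[X]) :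
    C ((N : ℤ) ^ ordPolyNat N g) * divP N g (ordPolyNat N g) = g := by
  ext t
  rw [coeff_C_mul, coeff_divP, Int.mul_ediv_cancel' (pow_dvd_coeff hN g t)]

lemma ordN_pow_mul (hN : 1 < N) (k : ℕ) (a : ℤ) :
    ordN N ((N : ℤ) ^ k * a) = k + ordN N a := by
  rcases eq_or_ne a 0 with rfl | ha
  · simp [ordN, emultiplicity_zero]
  · have fin := finN hN ha
    have h1 : (N : ℤ) ^ (k + multiplicity (N : ℤ) a) ∣ (N : ℤ) ^ k * a := by
      rw [pow_add]; exact mul_dvd_mul_left _ (pow_multiplicity_dvd _ _)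
    have h2 : ¬ (N : ℤ) ^ (k + multiplicity (N : ℤ) a + 1) ∣ (N : ℤ) ^ k * a := by
      intro hdvd
      rw [add_assoc, pow_add] at hdvd
      have := (mul_dvd_mul_iff_left (pow_ne_zero k (nz hN))).mp hdvd
      exact fin.not_pow_dvd_of_multiplicity_lt (Nat.lt_succ_self _) this
    rw [ordN, emultiplicity_eq_of_dvd_of_not_dvd h1 h2, ordN,
      fin.emultiplicity_eq_multiplicity]
    push_cast
    ring

lemma support_C_pow_mul (hN : 1 < N) (k : ℕ) (g : ℤ[X]) :
    (C ((N : ℤ) ^ k) * g).support = g.support := by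
  ext s
  rw [mem_support_iff, mem_support_iff, coeff_C_mul, mul_ne_zero_iff]
  simp [pow_ne_zero k (nz hN)]

lemma ordPoly_C_pow_mul (hN : 1 < N) (k : ℕ) (g : ℤ[X]) :
    ordPoly N (C ((N : ℤ) ^ k) * g) = k + ordPoly N g := by
  rcases eq_or_ne g 0 with rfl | hg
  · simp [ordPoly]
  · have hcong : ∀ s ∈ g.support,
        ordN N ((C ((N : ℤ) ^ k) * g).coeff s) = (k : ℕ∞) + ordN N (g.coeff s) :=
      fun s _ => by rw [coeff_C_mul]; exact ordN_pow_mul hN k (g.coeff s)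
    rw [ordPoly, support_C_pow_mul hN, Finset.inf_congr rfl hcong]
    obtain ⟨t, ht, hinf⟩ := Finset.exists_mem_eq_inf g.support
      (nonempty_support_iff.mpr hg) (fun s => ordN N (g.coeff s))
    apply le_antisymm
    · calc g.support.inf (fun s => (k : ℕ∞) + ordN N (g.coeff s))
          ≤ (k : ℕ∞) + ordN N (g.coeff t) := Finset.inf_le ht
        _ = k + ordPoly N g := by rw [ordPoly, hinf]
    · exact Finset.le_inf fun s hs => add_le_add_right (Finset.inf_le hs) _

lemma ordPolyNat_C_pow_mul (hN : 1 < N) (k : ℕ) {g : ℤ[X]} (hg : g ≠ 0) :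
    ordPolyNat N (C ((N : ℤ) ^ k) * g) = k + ordPolyNat N g := by
  have hne : C ((N : ℤ) ^ k) * g ≠ 0 :=
    mul_ne_zero (C_ne_zero.mpr (pow_ne_zero k (nz hN))) hg
  have : (ordPolyNat N (C ((N : ℤ) ^ k) * g) : ℕ∞) = ((k + ordPolyNat N g : ℕ) : ℕ∞) := by
    rw [← ordPoly_coe hN hne, ordPoly_C_pow_mul hN, ordPoly_coe hN hg]
    push_cast
    ring
  exact_mod_cast this

lemma R0_C_pow_mul (hN : 1 < N) (k : ℕ) {g : ℤ[X]} (hg : g ≠ 0) :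
    R0 N (C ((N : ℤ) ^ k) * g) = R0 N g := by
  rw [R0_eq, R0_eq]
  congr 1
  ext t
  rw [coeff_divP, coeff_divP, coeff_C_mul, ordPolyNat_C_pow_mul hN k hg, pow_add,
    Int.mul_ediv_mul_of_pos _ _ (pow_pos (by exact_mod_cast Nat.zero_lt_of_lt hN) k)]

lemma ordPoly_eq_zero (hN : 1 < N) {g : ℤ[X]} {t : ℕ} (ht : ¬ (N : ℤ) ∣ g.coeff t) :
    ordPoly N g = 0 := by
  have hne : g.coeff t ≠ 0 := fun h0 => ht (h0 ▸ dvd_zero _)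
  have hle : ordPoly N g ≤ ordN N (g.coeff t) := Finset.inf_le (mem_support_iff.mpr hne)
  rw [ordN, emultiplicity_eq_zero.mpr ht] at hle
  exact nonpos_iff_eq_zero.mp hle

lemma R0_of_ordPolyNat_zero {g : ℤ[X]} (hg : ordPolyNat N g = 0) :
    R0 N g = g.map (Int.castRingHom (ZMod N)) := by
  rw [R0_eq, hg]
  congr 1
  ext t
  rw [coeff_divP]
  simp

/-- a coefficient achieving the minimal valuation gives a nonzero residue. -/
lemma exists_coeff_not_dvd (hN : 1 < N) {g : ℤ[X]} (hg : g ≠ 0) :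
    ∃ t, ¬ (N : ℤ) ∣ (divP N g (ordPolyNat N g)).coeff t := by
  obtain ⟨t, ht, hinf⟩ := Finset.exists_mem_eq_inf g.support
    (nonempty_support_iff.mpr hg) (fun s => ordN N (g.coeff s))
  refine ⟨t, fun hdvd => ?_⟩
  rw [coeff_divP] at hdvd
  have hb : (N : ℤ) ^ ordPolyNat N g * (g.coeff t / (N : ℤ) ^ ordPolyNat N g) = g.coeff t :=
    Int.mul_ediv_cancel' (pow_dvd_coeff hN g t)
  have hd : (N : ℤ) ^ (ordPolyNat N g + 1) ∣ g.coeff t := by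
    rw [← hb, pow_succ]
    exact mul_dvd_mul_left _ hdvd
  have hle : ((ordPolyNat N g + 1 : ℕ) : ℕ∞) ≤ ordN N (g.coeff t) :=
    le_emultiplicity_of_pow_dvd hd
  have hemu : ordN N (g.coeff t) = (ordPolyNat N g : ℕ∞) := by
    rw [← hinf, ← ordPoly]
    exact ordPoly_coe hN hg
  rw [hemu, Nat.cast_le] at hle
  omega

end Statement9Aux

open Statement9Aux in
/-- Let `N > 1`, let `f ∈ ℤ[x]` be a nonzero `N`-robust polynomial and let
`h ∈ ℤ[x]` be nonzero.  Then `ord_N (f*h) = ord_N f + ord_N h` and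
`R₀(f*h) = R₀(f) · R₀(h)` in `(ℤ/Nℤ)[y]`. -/
theorem statement9 (N : ℕ) (hN : 1 < N) (f h : ℤ[X]) (hf : f ≠ 0) (hh : h ≠ 0)
    (hrob : NRobust N f) :
    ordPoly N (f * h) = ordPoly N f + ordPoly N h ∧
      R0 N (f * h) = R0 N f * R0 N h := by
  classical
  set φ := Int.castRingHom (ZMod N) with hφ
  set u := ordPolyNat N f with hu
  set v := ordPolyNat N h with hv
  set f₁ := divP N f u with hf₁def
  set h₁ := divP N h v with hh₁def
  have hfeq : C ((N : ℤ) ^ u) * f₁ = f := C_pow_mul_divP hN f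
  have hheq : C ((N : ℤ) ^ v) * h₁ = h := C_pow_mul_divP hN h
  have hf₁ : f₁ ≠ 0 := fun h0 => hf (by rw [← hfeq, h0, mul_zero])
  have hh₁ : h₁ ≠ 0 := fun h0 => hh (by rw [← hheq, h0, mul_zero])
  -- residues of f₁, h₁ are nonzero
  obtain ⟨tf, htf⟩ := exists_coeff_not_dvd hN hf
  obtain ⟨th, hth⟩ := exists_coeff_not_dvd hN hh
  have hof₁ : ordPoly N f₁ = 0 := ordPoly_eq_zero hN htf
  have hoh₁ : ordPoly N h₁ = 0 := ordPoly_eq_zero hN hth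
  set F := f₁.map φ with hF
  set H := h₁.map φ with hH
  have hFne : F ≠ 0 := fun h0 => by
    have : (φ (f₁.coeff tf)) = 0 := by rw [← coeff_map, ← hF, h0, coeff_zero]
    exact htf ((ZMod.intCast_zmod_eq_zero_iff_dvd _ N).mp this)
  have hHne : H ≠ 0 := fun h0 => by
    have : (φ (h₁.coeff th)) = 0 := by rw [← coeff_map, ← hH, h0, coeff_zero]
    exact hth ((ZMod.intCast_zmod_eq_zero_iff_dvd _ N).mp this)
  -- the leading coefficient of F is a unit thanks to robustness
  set d := F.natDegree with hd
  have hFd : F.coeff d ≠ 0 := by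
    rw [hd, coeff_natDegree]
    exact leadingCoeff_ne_zero.mpr hFne
  have hnd : ¬ (N : ℤ) ∣ f₁.coeff d := by
    intro hdvd
    exact hFd (by rw [hF, coeff_map, hφ]; exact (ZMod.intCast_zmod_eq_zero_iff_dvd _ N).mpr hdvd)
  have hane : f.coeff d ≠ 0 := by
    intro h0
    apply hnd
    rw [hf₁def, coeff_divP, h0, Int.zero_ediv]
    exact dvd_zero _
  have hordZ : ordZ N (f.coeff d) = u := by
    rw [ordZ]
    refine multiplicity_eq_of_dvd_of_not_dvd (pow_dvd_coeff hN f d) ?_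
    intro hdvd
    apply hnd
    rw [hf₁def, coeff_divP]
    have hb : (N : ℤ) ^ u * (f.coeff d / (N : ℤ) ^ u) = f.coeff d :=
      Int.mul_ediv_cancel' (pow_dvd_coeff hN f d)
    rw [pow_succ, ← hb, mul_dvd_mul_iff_left (pow_ne_zero u (nz hN))] at hdvd
    exact hdvd
  have hgcd : Int.gcd (f₁.coeff d) N = 1 := by
    have := hrob d (mem_support_iff.mpr hane)
    rw [hordZ] at this
    rw [hf₁def, coeff_divP]
    exact this
  have hunit : IsUnit (F.coeff d) := by
    obtain ⟨x, y, hxy⟩ := Int.isCoprime_iff_gcd_eq_one.mpr hgcd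
    have := congrArg φ hxy
    simp only [map_add, map_mul, map_one] at this
    have hN0 : φ (N : ℤ) = 0 := by
      rw [hφ]
      exact (ZMod.intCast_zmod_eq_zero_iff_dvd _ N).mpr dvd_rfl
    rw [hN0, mul_zero, add_zero] at this
    refine IsUnit.of_mul_eq_one (φ x) ?_
    rw [hF, coeff_map, mul_comm]
    exact this
  -- the key coefficient of the product
  have hkey : ¬ (N : ℤ) ∣ (f₁ * h₁).coeff (d + H.natDegree) := by
    intro hdvd
    have h0 : (F * H).coeff (d + H.natDegree) = 0 := by
      rw [hF, hH, ← Polynomial.map_mul, coeff_map, hφ]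
      exact (ZMod.intCast_zmod_eq_zero_iff_dvd _ N).mpr hdvd
    rw [hd, coeff_mul_degree_add_degree] at h0
    have hHl : H.leadingCoeff ≠ 0 := leadingCoeff_ne_zero.mpr hHne
    have hlc : F.leadingCoeff = F.coeff d := rfl
    rw [hlc] at h0
    exact hHl ((hunit.mul_right_eq_zero).mp h0)
  have hofh : ordPoly N (f₁ * h₁) = 0 := ordPoly_eq_zero hN hkey
  have hofhNat : ordPolyNat N (f₁ * h₁) = 0 := by
    rw [ordPolyNat, hofh]
    rfl
  -- the factorization of f*h
  have hfh : f * h = C ((N : ℤ) ^ (u + v)) * (f₁ * h₁) := by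
    rw [← hfeq, ← hheq, pow_add, C_mul]
    ring
  constructor
  · rw [hfh, ordPoly_C_pow_mul hN, hofh, add_zero, ordPoly_coe hN hf, ordPoly_coe hN hh,
      ← hu, ← hv]
    push_cast
    ring
  · have h1 : R0 N (f * h) = (f₁ * h₁).map φ := by
      rw [hfh, R0_C_pow_mul hN _ (mul_ne_zero hf₁ hh₁), R0_of_ordPolyNat_zero hofhNat]
    have h2 : R0 N f = f₁.map φ := by
      rw [← hfeq, R0_C_pow_mul hN _ hf₁, R0_of_ordPolyNat_zero]
      rw [ordPolyNat, hof₁]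
      rfl
    have h3 : R0 N h = h₁.map φ := by
      rw [← hheq, R0_C_pow_mul hN _ hh₁, R0_of_ordPolyNat_zero]
      rw [ordPolyNat, hoh₁]
      rfl
    rw [h1, h2, h3, Polynomial.map_mul]
end

section
/- Let N > 1 be an integer, let p be a prime factor of N, set ρ = ord_p(N), and let π : (ℤ/Nℤ)[y] → 𝔽_p[y] be the homomorphism induced by reduction modulo p. Let f ∈ ℤ[x] be a nonzero N-robust polynomial and set v = ord_N(f), so that ord_p(f) = ρv. Then in 𝔽_p[y] one has R_{p,0}(f) = c^v · π(R₀(f)), where R_{p,0}(f) denotes the reduction modulo p of f / p^{ρv} (with the variable renamed to y) and c ∈ 𝔽_p is the reduction modulo p of the integer N / p^ρ. -/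
open Polynomial

/-- Auxiliary: coefficients of the "divide all coefficients" sum. -/
lemma coeff_divsum (f : ℤ[X]) (d : ℤ) (n : ℕ) :
    (f.sum fun s a => C (a / d) * X ^ s).coeff n = f.coeff n / d := by
  rw [Polynomial.sum, finset_sum_coeff]
  simp only [coeff_C_mul_X_pow]
  rw [Finset.sum_ite_eq f.support n (fun s => f.coeff s / d)]
  split_ifs with h
  · rfl
  · rw [notMem_support_iff.mp h, Int.zero_ediv]

theorem statement11 (N : ℕ) (hN : 1 < N) (p : ℕ) (hp : p.Prime) (hpN : p ∣ N)
    (f : ℤ[X]) (hf : f ≠ 0) (hrob : NRobust N f)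
    (ρ : ℕ) (hρ : ρ = ordZ p (N : ℤ))
    (v : ℕ) (hv : (v : ℕ∞) = ordPoly N f) :
    ordPoly p f = ((ρ * v : ℕ) : ℕ∞) ∧
      (f.sum fun s a => C (a / (p : ℤ) ^ (ρ * v)) * X ^ s).map (Int.castRingHom (ZMod p)) =
        C (((N : ℤ) / (p : ℤ) ^ ρ : ℤ) : ZMod p) ^ v *
          (R0 N f).map (ZMod.castHom hpN (ZMod p)) := by
  have hN0 : (N : ℤ) ≠ 0 := by exact_mod_cast (by omega : N ≠ 0)
  have hpZ : Prime (p : ℤ) := Nat.prime_iff_prime_int.mp hp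
  have hp0 : (p : ℤ) ≠ 0 := hpZ.ne_zero
  have hNnatAbs : (N : ℤ).natAbs ≠ 1 := by simpa using hN.ne'
  have hfinN : ∀ s ∈ f.support, FiniteMultiplicity (N : ℤ) (f.coeff s) := fun s hs =>
    Int.finiteMultiplicity_iff.2 ⟨hNnatAbs, mem_support_iff.mp hs⟩
  have hfinpN : FiniteMultiplicity (p : ℤ) (N : ℤ) :=
    Int.finiteMultiplicity_iff.2 ⟨by simpa using hp.ne_one, hN0⟩
  set m : ℤ := (N : ℤ) / (p : ℤ) ^ ρ with hm
  have hρ' : ρ = multiplicity (p : ℤ) (N : ℤ) := hρ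
  have hdvd : (p : ℤ) ^ ρ ∣ (N : ℤ) := hρ' ▸ pow_multiplicity_dvd _ _
  have hNm : (N : ℤ) = (p : ℤ) ^ ρ * m := (Int.mul_ediv_cancel' hdvd).symm
  -- key coefficientwise p-adic valuation computation
  have key : ∀ s ∈ f.support,
      emultiplicity (p : ℤ) (f.coeff s)
        = ((ρ * multiplicity (N : ℤ) (f.coeff s) : ℕ) : ℕ∞) := by
    intro s hs
    set a := f.coeff s with ha'
    set k := multiplicity (N : ℤ) a with hk
    have hkdvd : (N : ℤ) ^ k ∣ a := pow_multiplicity_dvd _ _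
    have hab : a = (N : ℤ) ^ k * (a / (N : ℤ) ^ k) := (Int.mul_ediv_cancel' hkdvd).symm
    have hcop : IsCoprime (a / (N : ℤ) ^ k) (N : ℤ) :=
      Int.isCoprime_iff_gcd_eq_one.mpr (hrob s hs)
    have hpb : ¬ (p : ℤ) ∣ (a / (N : ℤ) ^ k) := fun hd =>
      hpZ.not_unit (hcop.isUnit_of_dvd' hd (Int.natCast_dvd_natCast.mpr hpN))
    calc emultiplicity (p : ℤ) a
        = emultiplicity (p : ℤ) ((N : ℤ) ^ k * (a / (N : ℤ) ^ k)) := by rw [← hab]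
      _ = k * emultiplicity (p : ℤ) (N : ℤ) + emultiplicity (p : ℤ) (a / (N : ℤ) ^ k) := by
          rw [emultiplicity_mul hpZ, emultiplicity_pow hpZ]
      _ = ((ρ * k : ℕ) : ℕ∞) := by
          rw [emultiplicity_eq_zero.2 hpb, add_zero,
            hfinpN.emultiplicity_eq_multiplicity, ← hρ']
          push_cast
          ring
  have hsupp : f.support.Nonempty := support_nonempty.mpr hf
  have hvle : ∀ s ∈ f.support, v ≤ multiplicity (N : ℤ) (f.coeff s) := by
    intro s hs
    have h1 : ordPoly N f ≤ ordN N (f.coeff s) := Finset.inf_le hs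
    rw [← hv, ordN, (hfinN s hs).emultiplicity_eq_multiplicity, Nat.cast_le] at h1
    exact h1
  obtain ⟨s₀, hs₀, hmin⟩ :=
    Finset.exists_mem_eq_inf f.support hsupp (fun s => ordN N (f.coeff s))
  have hk₀ : multiplicity (N : ℤ) (f.coeff s₀) = v := by
    have h2 : (v : ℕ∞) = (multiplicity (N : ℤ) (f.coeff s₀) : ℕ∞) := by
      rw [hv, ordPoly, hmin, ordN, (hfinN s₀ hs₀).emultiplicity_eq_multiplicity]
    exact_mod_cast h2.symm
  constructor
  · apply le_antisymm
    · calc ordPoly p f ≤ ordN p (f.coeff s₀) := Finset.inf_le hs₀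
        _ = _ := by rw [ordN, key s₀ hs₀, hk₀]
    · apply Finset.le_inf
      intro s hs
      rw [ordN, key s hs, Nat.cast_le]
      exact Nat.mul_le_mul_left ρ (hvle s hs)
  · have hvnat : ordPolyNat N f = v := by
      rw [ordPolyNat, ← hv]; rfl
    have hNv : ∀ n, (N : ℤ) ^ v ∣ f.coeff n := by
      intro n
      by_cases hn : n ∈ f.support
      · exact dvd_trans (pow_dvd_pow _ (hvle n hn)) (pow_multiplicity_dvd _ _)
      · rw [notMem_support_iff.mp hn]; exact dvd_zero _
    have hNpow : (N : ℤ) ^ v = (p : ℤ) ^ (ρ * v) * m ^ v := by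
      rw [hNm, mul_pow, pow_mul]
    have hgh : (f.sum fun s a => C (a / (p : ℤ) ^ (ρ * v)) * X ^ s) =
        C (m ^ v) * (f.sum fun s a => C (a / (N : ℤ) ^ v) * X ^ s) := by
      ext n
      rw [coeff_divsum, coeff_C_mul, coeff_divsum]
      obtain ⟨t, ht⟩ := hNv n
      have h1 : f.coeff n / (N : ℤ) ^ v = t := by
        rw [ht, Int.mul_ediv_cancel_left _ (pow_ne_zero v hN0)]
      have h2 : f.coeff n / (p : ℤ) ^ (ρ * v) = m ^ v * t := by
        rw [ht, hNpow, mul_assoc, Int.mul_ediv_cancel_left _ (pow_ne_zero _ hp0)]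
      rw [h1, h2]
    rw [hgh, Polynomial.map_mul, Polynomial.map_C, R0, hvnat, Polynomial.map_map,
      RingHom.ext_int ((ZMod.castHom hpN (ZMod p)).comp (Int.castRingHom (ZMod N)))
        (Int.castRingHom (ZMod p))]
    congr 1
    rw [eq_intCast (Int.castRingHom (ZMod p)), Int.cast_pow, ← C_pow]
end

section
/- Let A be a commutative ring, let 𝔪 be a maximal ideal of A, and let t ∈ A[y] be a monic polynomial of positive degree. Set B = A[y]/(t). Then the set of maximal ideals 𝔫 of B whose contraction to A equals 𝔪 is finite and in bijection with the set of monic irreducible factors of the image of t in (A/𝔪)[y]; the bijection sends the monic irreducible factor ψ̄ of red_𝔪(t) to the image in B of the maximal ideal of A[y] generated by 𝔪 and any monic lift ψ ∈ A[y] of ψ̄. -/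
open Polynomial

/-- Let `A` be a commutative ring, `𝔪` a maximal ideal of `A`, and
`t ∈ A[y]` a monic polynomial of positive degree.  Set `B = A[y]/(t)` (realized as
`AdjoinRoot t`).  Then the set of maximal ideals `𝔫` of `B` whose contraction to `A` equals
`𝔪` is finite and in bijection with the set of monic irreducible factors of the image of
`t` in `(A/𝔪)[y]`; the bijection sends the monic irreducible factor `ψ̄` of `red_𝔪 t` to
the image in `B` of the maximal ideal of `A[y]` generated by `𝔪` and any monic lift
`ψ ∈ A[y]` of `ψ̄`. -/
theorem statement12 {A : Type*} [CommRing A] (𝔪 : Ideal A) [𝔪.IsMaximal]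
    (t : A[X]) (ht : t.Monic) (hdeg : 0 < t.natDegree) :
    Finite {𝔫 : Ideal (AdjoinRoot t) //
        𝔫.IsMaximal ∧ Ideal.comap (algebraMap A (AdjoinRoot t)) 𝔫 = 𝔪} ∧
      ∃ e : {g : Polynomial (A ⧸ 𝔪) //
              g.Monic ∧ Irreducible g ∧ g ∣ t.map (Ideal.Quotient.mk 𝔪)} ≃
            {𝔫 : Ideal (AdjoinRoot t) //
              𝔫.IsMaximal ∧ Ideal.comap (algebraMap A (AdjoinRoot t)) 𝔫 = 𝔪},
        ∀ (g : Polynomial (A ⧸ 𝔪))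
          (hg : g.Monic ∧ Irreducible g ∧ g ∣ t.map (Ideal.Quotient.mk 𝔪))
          (ψ : A[X]), ψ.Monic → ψ.map (Ideal.Quotient.mk 𝔪) = g →
          (e ⟨g, hg⟩ : Ideal (AdjoinRoot t)) =
            Ideal.map (AdjoinRoot.mk t)
              (Ideal.map (Polynomial.C : A →+* A[X]) 𝔪 ⊔ Ideal.span {ψ}) := by
  classical
  letI : Field (A ⧸ 𝔪) := Ideal.Quotient.field 𝔪
  set π : A →+* A ⧸ 𝔪 := Ideal.Quotient.mk 𝔪 with hπdef
  set φ : A[X] →+* (A ⧸ 𝔪)[X] := Polynomial.mapRingHom π with hφdef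
  have hπs : Function.Surjective π := Ideal.Quotient.mk_surjective
  have hφs : Function.Surjective φ := Polynomial.map_surjective π hπs
  have hkerφ : RingHom.ker φ = Ideal.map (C : A →+* A[X]) 𝔪 := by
    rw [hφdef, Polynomial.ker_mapRingHom, Ideal.mk_ker]
  have hmks : Function.Surjective (AdjoinRoot.mk t) := AdjoinRoot.mk_surjective
  have hkermk : RingHom.ker (AdjoinRoot.mk t) = Ideal.span {t} := by
    ext p
    rw [RingHom.mem_ker, AdjoinRoot.mk_eq_zero, Ideal.mem_span_singleton]
  set tbar : (A ⧸ 𝔪)[X] := t.map π with htbardef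
  have htbarm : tbar.Monic := ht.map π
  have htbar0 : tbar ≠ 0 := htbarm.ne_zero
  -- key: the ideal generated by 𝔪 and a lift ψ of g is the preimage of (g)
  have hJ : ∀ (g : (A ⧸ 𝔪)[X]) (ψ : A[X]), ψ.map π = g →
      Ideal.map (C : A →+* A[X]) 𝔪 ⊔ Ideal.span {ψ}
        = Ideal.comap φ (Ideal.span {g}) := by
    intro g ψ hψ
    apply le_antisymm
    · refine sup_le ?_ ?_
      · rw [Ideal.map_le_iff_le_comap]
        intro a ha
        rw [Ideal.mem_comap, Ideal.mem_comap]
        have : φ (C a) = 0 := by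
          simp [hφdef, hπdef, Ideal.Quotient.eq_zero_iff_mem.2 ha, ha]
        rw [this]
        exact Ideal.zero_mem _
      · rw [Ideal.span_le, Set.singleton_subset_iff]
        rw [SetLike.mem_coe, Ideal.mem_comap]
        have : φ ψ = g := hψ
        rw [this]
        exact Ideal.subset_span rfl
    · intro p hp
      rw [Ideal.mem_comap, Ideal.mem_span_singleton] at hp
      obtain ⟨qbar, hq⟩ := hp
      obtain ⟨q, rfl⟩ := hφs qbar
      have hker : p - ψ * q ∈ Ideal.map (C : A →+* A[X]) 𝔪 := by
        rw [← hkerφ, RingHom.mem_ker, map_sub, map_mul, hq]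
        have : φ ψ = g := hψ
        rw [this, sub_self]
      have hp' : p = (p - ψ * q) + ψ * q := by ring
      rw [hp']
      exact Ideal.add_mem _ (Ideal.mem_sup_left hker)
        (Ideal.mem_sup_right (Ideal.mul_mem_right _ _ (Ideal.subset_span rfl)))
  have halg : algebraMap A (AdjoinRoot t) = (AdjoinRoot.mk t).comp (C : A →+* A[X]) := rfl
  -- the forward map
  have hφt : φ t = tbar := rfl
  -- properties of N g := map (mk t) (comap φ (span {g}))
  have key : ∀ (g : (A ⧸ 𝔪)[X]), g.Monic → Irreducible g → g ∣ tbar →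
      (Ideal.map (AdjoinRoot.mk t) (Ideal.comap φ (Ideal.span {g}))).IsMaximal ∧
      Ideal.comap (algebraMap A (AdjoinRoot t))
        (Ideal.map (AdjoinRoot.mk t) (Ideal.comap φ (Ideal.span {g}))) = 𝔪 := by
    intro g hgm hgi hgd
    set J : Ideal A[X] := Ideal.comap φ (Ideal.span {g}) with hJdef
    haveI hspanmax : (Ideal.span {g}).IsMaximal :=
      PrincipalIdealRing.isMaximal_of_irreducible hgi
    haveI hJmax : J.IsMaximal := Ideal.comap_isMaximal_of_surjective φ hφs
    have htJ : t ∈ J := by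
      rw [hJdef, Ideal.mem_comap, hφt, Ideal.mem_span_singleton]
      exact hgd
    have hkerJ : RingHom.ker (AdjoinRoot.mk t) ≤ J := by
      rw [hkermk, Ideal.span_le, Set.singleton_subset_iff]
      exact htJ
    have hcomapJ : Ideal.comap (AdjoinRoot.mk t) (Ideal.map (AdjoinRoot.mk t) J) = J := by
      rw [Ideal.comap_map_of_surjective _ hmks, sup_eq_left]
      intro x hx
      exact hkerJ hx
    have hNmax : (Ideal.map (AdjoinRoot.mk t) J).IsMaximal := by
      rcases Ideal.map_eq_top_or_isMaximal_of_surjective _ hmks hJmax with h | h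
      · exfalso
        apply hJmax.ne_top
        rw [← hcomapJ, h, Ideal.comap_top]
      · exact h
    refine ⟨hNmax, ?_⟩
    rw [halg, ← Ideal.comap_comap, hcomapJ]
    have hle : 𝔪 ≤ Ideal.comap (C : A →+* A[X]) J := by
      intro a ha
      rw [Ideal.mem_comap, hJdef, Ideal.mem_comap]
      have : φ (C a) = 0 := by
        simp [hφdef, hπdef, Ideal.Quotient.eq_zero_iff_mem.2 ha, ha]
      rw [this]
      exact Ideal.zero_mem _
    have hne : Ideal.comap (C : A →+* A[X]) J ≠ ⊤ := by
      intro h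
      apply hJmax.ne_top
      rw [Ideal.eq_top_iff_one]
      have : (1 : A) ∈ Ideal.comap (C : A →+* A[X]) J := h ▸ Submodule.mem_top
      simpa using this
    exact ((‹𝔪.IsMaximal›).eq_of_le hne hle).symm
  -- define the map
  set E : {g : Polynomial (A ⧸ 𝔪) // g.Monic ∧ Irreducible g ∧ g ∣ tbar} →
      {𝔫 : Ideal (AdjoinRoot t) //
        𝔫.IsMaximal ∧ Ideal.comap (algebraMap A (AdjoinRoot t)) 𝔫 = 𝔪} :=
    fun g => ⟨Ideal.map (AdjoinRoot.mk t) (Ideal.comap φ (Ideal.span {g.1})),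
      key g.1 g.2.1 g.2.2.1 g.2.2.2⟩ with hEdef
  have hEinj : Function.Injective E := by
    intro g₁ g₂ h
    have h' : Ideal.map (AdjoinRoot.mk t) (Ideal.comap φ (Ideal.span {g₁.1}))
        = Ideal.map (AdjoinRoot.mk t) (Ideal.comap φ (Ideal.span {g₂.1})) :=
      congrArg Subtype.val h
    have hker : ∀ (g : (A ⧸ 𝔪)[X]), g ∣ tbar →
        Ideal.comap (AdjoinRoot.mk t)
          (Ideal.map (AdjoinRoot.mk t) (Ideal.comap φ (Ideal.span {g})))
          = Ideal.comap φ (Ideal.span {g}) := by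
      intro g hgd
      rw [Ideal.comap_map_of_surjective _ hmks, sup_eq_left]
      intro x hx
      obtain ⟨c, rfl⟩ := AdjoinRoot.mk_eq_zero.mp hx
      refine Ideal.mul_mem_right _ _ ?_
      rw [Ideal.mem_comap, hφt, Ideal.mem_span_singleton]
      exact hgd
    have hJeq : Ideal.comap φ (Ideal.span {g₁.1}) = Ideal.comap φ (Ideal.span {g₂.1}) := by
      rw [← hker g₁.1 g₁.2.2.2, ← hker g₂.1 g₂.2.2.2, h']
    have hspan : Ideal.span {g₁.1} = Ideal.span {g₂.1} := by
      rw [← Ideal.map_comap_of_surjective φ hφs (Ideal.span {g₁.1}),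
        ← Ideal.map_comap_of_surjective φ hφs (Ideal.span {g₂.1}), hJeq]
    have hassoc : Associated g₁.1 g₂.1 := by
      rwa [Ideal.span_singleton_eq_span_singleton] at hspan
    exact Subtype.ext (Polynomial.eq_of_monic_of_associated g₁.2.1 g₂.2.1 hassoc)
  have hEsurj : Function.Surjective E := by
    rintro ⟨𝔫, h𝔫max, h𝔫c⟩
    set J : Ideal A[X] := Ideal.comap (AdjoinRoot.mk t) 𝔫 with hJdef
    haveI hJmax : J.IsMaximal := Ideal.comap_isMaximal_of_surjective _ hmks
    have htJ : t ∈ J := by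
      rw [hJdef, Ideal.mem_comap]
      have : AdjoinRoot.mk t t = 0 := by
        rw [AdjoinRoot.mk_eq_zero]
      rw [this]
      exact Ideal.zero_mem _
    have hkerJ : RingHom.ker φ ≤ J := by
      rw [hkerφ, Ideal.map_le_iff_le_comap]
      intro a ha
      rw [Ideal.mem_comap, hJdef, Ideal.mem_comap]
      have : (AdjoinRoot.mk t) (C a) = algebraMap A (AdjoinRoot t) a := rfl
      rw [this]
      rw [← h𝔫c] at ha
      exact ha
    set I : Ideal ((A ⧸ 𝔪)[X]) := Ideal.map φ J with hIdef
    have hcomapI : Ideal.comap φ I = J := by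
      rw [hIdef, Ideal.comap_map_of_surjective _ hφs, sup_eq_left]
      intro x hx
      exact hkerJ hx
    haveI hImax : I.IsMaximal := by
      rcases Ideal.map_eq_top_or_isMaximal_of_surjective _ hφs hJmax with h | h
      · exfalso
        apply hJmax.ne_top
        rw [← hcomapI, hIdef, h, Ideal.comap_top]
      · exact h
    have htbarI : tbar ∈ I := by
      rw [← hcomapI] at htJ
      rw [Ideal.mem_comap, hφt] at htJ
      exact htJ
    obtain ⟨p, hpI0⟩ := Submodule.IsPrincipal.principal I
    have hpI : I = Ideal.span {p} := hpI0
    have hp0 : p ≠ 0 := by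
      intro h
      rw [hpI, h, Ideal.span_singleton_eq_bot.mpr rfl] at htbarI
      exact htbar0 (Ideal.mem_bot.mp htbarI)
    have hpirr : Irreducible p := by
      have hprime : (Ideal.span {p}).IsPrime := by
        rw [← hpI]; exact hImax.isPrime
      exact ((Ideal.span_singleton_prime hp0).mp hprime).irreducible
    set g : (A ⧸ 𝔪)[X] := normalize p with hgdef
    have hgm : g.Monic := Polynomial.monic_normalize hp0
    have hgassoc : Associated p g := (normalize_associated p).symm
    have hgirr : Irreducible g := hgassoc.irreducible hpirr
    have hspang : Ideal.span {g} = I := by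
      rw [hpI]
      exact Ideal.span_singleton_eq_span_singleton.mpr hgassoc.symm
    have hgd : g ∣ tbar := by
      rw [← Ideal.mem_span_singleton, hspang]
      exact htbarI
    refine ⟨⟨g, hgm, hgirr, hgd⟩, ?_⟩
    apply Subtype.ext
    show Ideal.map (AdjoinRoot.mk t) (Ideal.comap φ (Ideal.span {g})) = 𝔫
    rw [hspang, hcomapI, hJdef, Ideal.map_comap_of_surjective _ hmks]
  let e : {g : Polynomial (A ⧸ 𝔪) // g.Monic ∧ Irreducible g ∧ g ∣ tbar} ≃
      {𝔫 : Ideal (AdjoinRoot t) //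
        𝔫.IsMaximal ∧ Ideal.comap (algebraMap A (AdjoinRoot t)) 𝔫 = 𝔪} :=
    Equiv.ofBijective E ⟨hEinj, hEsurj⟩
  -- finiteness of the factor side
  haveI hfin : Finite {g : Polynomial (A ⧸ 𝔪) // g.Monic ∧ Irreducible g ∧ g ∣ tbar} := by
    have hmem : ∀ g : {g : Polynomial (A ⧸ 𝔪) // g.Monic ∧ Irreducible g ∧ g ∣ tbar},
        g.1 ∈ (UniqueFactorizationMonoid.normalizedFactors tbar).toFinset := by
      rintro ⟨g, hgm, hgi, hgd⟩
      show g ∈ _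
      rw [Multiset.mem_toFinset]
      obtain ⟨q, hq, hassoc⟩ :=
        UniqueFactorizationMonoid.exists_mem_normalizedFactors_of_dvd htbar0 hgi hgd
      have h1 : normalize g = normalize q :=
        normalize_eq_normalize hassoc.dvd hassoc.symm.dvd
      rw [hgm.normalize_eq_self,
        UniqueFactorizationMonoid.normalize_normalized_factor q hq] at h1
      rw [h1]
      exact hq
    exact Finite.of_injective
      (fun g => (⟨g.1, hmem g⟩ :
        {x // x ∈ (UniqueFactorizationMonoid.normalizedFactors tbar).toFinset}))
      (by
        intro a b h
        simp only [Subtype.mk.injEq] at h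
        exact Subtype.ext h)
  refine ⟨Finite.of_equiv _ e, e, ?_⟩
  intro g hg ψ hψm hψmap
  have : e ⟨g, hg⟩ = E ⟨g, hg⟩ := rfl
  rw [this]
  show Ideal.map (AdjoinRoot.mk t) (Ideal.comap φ (Ideal.span {g})) = _
  rw [← hJ g ψ hψmap]
end

section
/- Let K be a number field, p a prime number, 𝒫 the set of maximal ideals of ℤ_K over p, and for 𝔭 ∈ 𝒫 let e_𝔭, v_𝔭, w_𝔭 = v_𝔭/e_𝔭, and w = min_𝔭 w_𝔭 be as usual. For each 𝔭 ∈ 𝒫 fix π_𝔭 ∈ K with v_𝔭(π_𝔭) = 1 lying in the valuation ring Z_𝔭 of v_𝔭 in K, and let F_𝔭 = Z_𝔭/𝔭Z_𝔭 be the residue field. For δ ∈ w(K) let K_δ = {α ∈ K : w(α) ≥ δ} and define rd_δ : K_δ → V = ∏_{𝔭 ∈ 𝒫} F_𝔭 by rd_δ(α) = (α·π_𝔭^{−⌊e_𝔭 δ⌋} + 𝔭Z_𝔭)_{𝔭 ∈ 𝒫} (each α·π_𝔭^{−⌊e_𝔭δ⌋} indeed lies in Z_𝔭). Then a finite subset ℬ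 ⊂ K with w(ℬ) ⊂ [0, 1) is p-reduced if and only if for every δ ∈ w(ℬ) the family rd_δ(ℬ_δ) ⊂ V is linearly independent over 𝔽_p, where ℬ_δ = {α ∈ ℬ : w(α) = δ}. -/
open NumberField

set_option synthInstance.maxHeartbeats 1000000
set_option maxHeartbeats 1000000

set_option linter.unusedSectionVars false

namespace S14
variable {K : Type*} [Field K] [CharZero K]

section V
variable (v : K → WithTop ℤ)
  (hvt : ∀ x : K, v x = ⊤ ↔ x = 0)
  (hvm : ∀ x y : K, v (x * y) = v x + v y)
include hvt hvm

lemma v_ne_top {x : K} (hx : x ≠ 0) : v x ≠ ⊤ := by simp [hvt, hx]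

lemma v_one : v 1 = 0 := by
  have h := hvm 1 1
  rw [mul_one] at h
  have h1 : v 1 ≠ ⊤ := v_ne_top v hvt hvm one_ne_zero
  lift v 1 to ℤ using h1 with z hz
  have : z = z + z := by exact_mod_cast h
  have : z = 0 := by omega
  exact_mod_cast congrArg (WithTop.some) this

lemma v_neg (x : K) : v (-x) = v x := by
  have hm1 : v (-1 : K) = 0 := by
    have h := hvm (-1) (-1)
    rw [neg_one_mul, neg_neg, v_one v hvt hvm] at h
    have h1 : v (-1 : K) ≠ ⊤ := v_ne_top v hvt hvm (by norm_num)
    lift v (-1 : K) to ℤ using h1 with z hz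
    have : (0 : ℤ) = z + z := by exact_mod_cast h
    have : z = 0 := by omega
    exact_mod_cast congrArg (WithTop.some) this
  calc v (-x) = v ((-1) * x) := by rw [neg_one_mul]
  _ = v x := by rw [hvm, hm1, zero_add]

lemma v_pow {x : K} {z : ℤ} (hx : v x = (z : WithTop ℤ)) (n : ℕ) :
    v (x ^ n) = (((n : ℤ) * z : ℤ) : WithTop ℤ) := by
  induction n with
  | zero => simpa using v_one v hvt hvm
  | succ n ih =>
    rw [pow_succ, hvm, ih, hx, ← WithTop.coe_add]
    congr 1
    push_cast
    ring

variable {R : Type*} [CommRing R] [Algebra R K]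
variable (p : ℕ) (hp : p.Prime) (q : Ideal R) (hq : q ≠ ⊤) (hpq : (p : R) ∈ q)
variable (hvi : ∀ (x : R) (k : ℕ), ((k : ℤ) : WithTop ℤ) ≤ v (algebraMap R K x) ↔ x ∈ q ^ k)
variable (e : ℕ) (he : ((e : ℤ) : WithTop ℤ) = v (p : K))
include hp hq hpq hvi

lemma v_nat_unit (n : ℕ) (hn0 : n ≠ 0) (hn : ¬ p ∣ n) : v (n : K) = 0 := by
  have key : algebraMap R K ((n : ℕ) : R) = (n : K) := map_natCast _ n
  have h0 : (((0:ℕ) : ℤ) : WithTop ℤ) ≤ v (n : K) := by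
    have := (hvi ((n : ℕ) : R) 0).mpr (by simp)
    rwa [key] at this
  have h1 : ¬ (((1:ℕ) : ℤ) : WithTop ℤ) ≤ v (n : K) := by
    intro h
    have hnq : ((n : ℕ) : R) ∈ q := by
      have := (hvi ((n : ℕ) : R) 1).mp (by rwa [key])
      simpa using this
    have hcop : IsCoprime (p : ℤ) (n : ℤ) := by
      rw [Int.isCoprime_iff_gcd_eq_one, Int.gcd_natCast_natCast]
      exact (hp.coprime_iff_not_dvd.mpr hn)
    obtain ⟨a, b, hab⟩ := hcop
    have h' : (a : R) * (p : R) + (b : R) * (n : R) = 1 := by exact_mod_cast congrArg (fun z : ℤ => (z : R)) hab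
    have : (1 : R) ∈ q := by
      rw [← h']
      exact Ideal.add_mem q (q.mul_mem_left _ hpq) (q.mul_mem_left _ hnq)
    exact hq ((Ideal.eq_top_iff_one q).mpr this)
  have hne : v (n : K) ≠ ⊤ := by intro h; exact h1 (h ▸ le_top)
  lift v (n : K) to ℤ using hne with z hz
  have hz0 : (0 : ℤ) ≤ z := by exact_mod_cast h0
  have hz1 : ¬ (1 : ℤ) ≤ z := fun h => h1 (by exact_mod_cast h)
  have : z = 0 := by omega
  exact_mod_cast congrArg (WithTop.some) this

include he

lemma v_nat (n : ℕ) (hn : n ≠ 0) :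
    v (n : K) = (((e : ℤ) * padicValNat p n : ℤ) : WithTop ℤ) := by
  set k := n.factorization p with hk
  set u := n / p ^ k with hu
  have hdecomp : p ^ k * u = n := Nat.ordProj_mul_ordCompl_eq_self n p
  have hud : ¬ p ∣ u := Nat.not_dvd_ordCompl hp hn
  have hu0 : u ≠ 0 := (Nat.ordCompl_pos p hn).ne'
  have hcast : (n : K) = (p : K) ^ k * (u : K) := by
    rw [← hdecomp]; push_cast; ring
  rw [hcast, hvm, v_pow v hvt hvm he.symm k,
    v_nat_unit v hvt hvm p hp q hq hpq hvi u hu0 hud, add_zero]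
  congr 1
  rw [hk, Nat.factorization_def n hp]
  ring

lemma v_int (n : ℤ) (hn : n ≠ 0) :
    v (n : K) = (((e : ℤ) * padicValInt p n : ℤ) : WithTop ℤ) := by
  have hna : n.natAbs ≠ 0 := Int.natAbs_ne_zero.mpr hn
  have hval : padicValInt p n = padicValNat p n.natAbs := rfl
  rw [hval]
  rcases Int.natAbs_eq n with h | h
  · rw [show ((n : ℤ) : K) = (((n.natAbs : ℤ)) : K) from congrArg _ h, Int.cast_natCast,
      v_nat v hvt hvm p hp q hq hpq hvi e he n.natAbs hna]
  · have hK : ((n : ℤ) : K) = -((n.natAbs : ℕ) : K) := by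
      conv_lhs => rw [h]
      rw [Int.cast_neg, Int.cast_natCast]
    rw [hK, v_neg v hvt hvm, v_nat v hvt hvm p hp q hq hpq hvi e he n.natAbs hna]

lemma v_rat (c : ℚ) (hc : c ≠ 0) :
    v (c : K) = (((e : ℤ) * padicValRat p c : ℤ) : WithTop ℤ) := by
  have hnum : c.num ≠ 0 := Rat.num_ne_zero.mpr hc
  have hden : c.den ≠ 0 := c.den_nz
  have hdenK : (c.den : K) ≠ 0 := Nat.cast_ne_zero.mpr hden
  have key : (c : K) * (c.den : K) = (c.num : K) := by
    rw [Rat.cast_def, div_mul_cancel₀ _ hdenK]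
  have h2 := hvm (c : K) ((c.den : ℕ) : K)
  rw [key, v_int v hvt hvm p hp q hq hpq hvi e he c.num hnum,
    v_nat v hvt hvm p hp q hq hpq hvi e he c.den hden] at h2
  have hct : v (c : K) ≠ ⊤ := v_ne_top v hvt hvm (Rat.cast_ne_zero.mpr hc)
  lift v (c : K) to ℤ using hct with z hz
  have h3 : (e : ℤ) * padicValInt p c.num = z + (e : ℤ) * padicValNat p c.den := by
    exact_mod_cast h2
  have hz : z = (e : ℤ) * padicValRat p c := by
    have : padicValRat p c = padicValInt p c.num - padicValNat p c.den := rfl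
    rw [this]; linarith [h3]
  exact_mod_cast congrArg (WithTop.some) hz

end V
end S14

/-- Let `K` be a number field, `p` a prime, `𝒫` the set of maximal ideals
of `ℤ_K` over `p`, and for `𝔭 ∈ 𝒫` let `e_𝔭`, `v_𝔭`, `w_𝔭 = v_𝔭/e_𝔭` and `w = min_𝔭 w_𝔭`
be as usual.  For each `𝔭 ∈ 𝒫` fix `π_𝔭 ∈ K` with `v_𝔭 (π_𝔭) = 1` (hence `π_𝔭` lies in the
valuation ring `Z_𝔭` of `v_𝔭`).  For `δ ∈ w(K)` let `K_δ = {α : w α ≥ δ}` and define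
`rd_δ : K_δ → V = ∏_{𝔭 ∈ 𝒫} F_𝔭` by `rd_δ α = (α·π_𝔭^(-⌊e_𝔭 δ⌋) mod 𝔭Z_𝔭)_𝔭`.  Then a
finite subset `ℬ = {α₁, …, α_m} ⊂ K` with `w(ℬ) ⊂ [0,1)` is `p`-reduced if and only if for
every `δ ∈ w(ℬ)` the family `rd_δ(ℬ_δ)` is `𝔽_p`-linearly independent in `V`, where
`ℬ_δ = {α ∈ ℬ : w α = δ}`.  (Here linear independence of `rd_δ(ℬ_δ)` over `𝔽_p` is spelled
out via integer lifts of the coefficients: whenever integers `c_i` satisfy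
`Σ_{i ∈ ℬ_δ} c_i·α_i·π_𝔭^(-⌊e_𝔭 δ⌋) ≡ 0 (mod 𝔭Z_𝔭)`, i.e. has positive `v_𝔭`, for every
`𝔭 ∈ 𝒫`, then `p ∣ c_i` for all `i ∈ ℬ_δ`.) -/
theorem statement14 {K : Type*} [Field K] [NumberField K]
    (p : ℕ) (hp : p.Prime)
    (P : Set (Ideal (RingOfIntegers K)))
    (hP : ∀ q : Ideal (RingOfIntegers K), q ∈ P ↔ q.IsMaximal ∧ (p : RingOfIntegers K) ∈ q)
    (v : Ideal (RingOfIntegers K) → K → WithTop ℤ)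
    (hv_top : ∀ q ∈ P, ∀ x : K, v q x = ⊤ ↔ x = 0)
    (hv_mul : ∀ q ∈ P, ∀ x y : K, v q (x * y) = v q x + v q y)
    (hv_min : ∀ q ∈ P, ∀ x y : K, min (v q x) (v q y) ≤ v q (x + y))
    (hv_int : ∀ q ∈ P, ∀ (x : RingOfIntegers K) (k : ℕ),
        ((k : ℤ) : WithTop ℤ) ≤ v q (algebraMap (RingOfIntegers K) K x) ↔ x ∈ q ^ k)
    (e : Ideal (RingOfIntegers K) → ℕ)
    (he : ∀ q ∈ P, ((e q : ℤ) : WithTop ℤ) = v q (p : K))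
    (w : K → WithTop ℚ)
    (hw : ∀ x : K,
        (∀ q ∈ P, w x ≤ (v q x).map fun z : ℤ => (z : ℚ) / (e q : ℚ)) ∧
        (∃ q ∈ P, w x = (v q x).map fun z : ℤ => (z : ℚ) / (e q : ℚ)))
    (π : Ideal (RingOfIntegers K) → K)
    (hπ : ∀ q ∈ P, v q (π q) = 1)
    (m : ℕ) (α : Fin m → K) (hα : Function.Injective α)
    (hw01 : ∀ i : Fin m, 0 ≤ w (α i) ∧ w (α i) < 1) :
    (∀ a : Fin m → ℚ, (∀ i, 0 ≤ padicValRat p (a i)) →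
        w (∑ i, a i • α i) = Finset.univ.inf fun i => w (a i • α i)) ↔
      (∀ δ : ℚ, (∃ i : Fin m, w (α i) = (δ : WithTop ℚ)) →
        ∀ c : Fin m → ℤ,
          (∀ q ∈ P, 0 < v q (∑ i ∈ Finset.univ.filter (fun i => w (α i) = (δ : WithTop ℚ)),
              (c i : K) * (α i * π q ^ (-⌊(e q : ℚ) * δ⌋)))) →
          ∀ i : Fin m, w (α i) = (δ : WithTop ℚ) → (p : ℤ) ∣ c i) := by
  classical
  haveI : Fact p.Prime := ⟨hp⟩
  -- basic facts about the places
  have hqmax : ∀ q ∈ P, q.IsMaximal := fun q hq => ((hP q).mp hq).1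
  have hqp : ∀ q ∈ P, (p : RingOfIntegers K) ∈ q := fun q hq => ((hP q).mp hq).2
  have e_pos : ∀ q ∈ P, 0 < e q := by
    intro q hq
    have h1 : (((1:ℕ) : ℤ) : WithTop ℤ) ≤ v q (p : K) := by
      have := (hv_int q hq ((p : ℕ) : RingOfIntegers K) 1).mpr (by simpa using hqp q hq)
      rwa [map_natCast] at this
    rw [← he q hq] at h1
    have : (1 : ℤ) ≤ (e q : ℤ) := by exact_mod_cast h1
    omega
  have hvrat : ∀ q ∈ P, ∀ (c : ℚ), c ≠ 0 →
      v q ((c : ℚ) : K) = (((e q : ℤ) * padicValRat p c : ℤ) : WithTop ℤ) :=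
    fun q hq c hc => S14.v_rat (v q) (hv_top q hq) (hv_mul q hq) p hp q
      (hqmax q hq).ne_top (hqp q hq) (hv_int q hq) (e q) (he q hq) c hc
  -- basic facts about w
  have hw0 : w (0 : K) = ⊤ := by
    obtain ⟨q, hq, h⟩ := (hw 0).2
    rw [h, (hv_top q hq 0).mpr rfl, WithTop.map_top]
  have hwtop : ∀ x : K, x ≠ 0 → w x ≠ ⊤ := by
    intro x hx
    obtain ⟨q, hq, h⟩ := (hw x).2
    rw [h, Ne, WithTop.map_eq_top_iff, hv_top q hq]
    exact hx
  have hα0 : ∀ i, α i ≠ 0 := by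
    intro i h
    have := (hw01 i).2
    rw [h, hw0] at this
    exact (not_top_lt this)
  have hmono : ∀ q ∈ P, ∀ a b : WithTop ℤ, a ≤ b →
      a.map (fun z : ℤ => (z : ℚ) / (e q : ℚ)) ≤ b.map (fun z : ℤ => (z : ℚ) / (e q : ℚ)) := by
    intro q hq a b hab
    cases b with
    | top => rw [WithTop.map_top]; exact le_top
    | coe zb =>
      have ha' : a ≠ ⊤ := by
        intro h; rw [h] at hab; exact (WithTop.not_top_le_coe zb) hab
      lift a to ℤ using ha' with za
      rw [WithTop.map_coe, WithTop.map_coe, WithTop.coe_le_coe]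
      have hz : (za : ℚ) ≤ (zb : ℚ) := by exact_mod_cast hab
      have he' : (0 : ℚ) < (e q : ℚ) := by exact_mod_cast e_pos q hq
      exact (div_le_div_iff_of_pos_right he').mpr hz
  have w_le_q : ∀ q ∈ P, ∀ x : K, ∀ z : ℤ, v q x = (z : WithTop ℤ) →
      w x ≤ (((z : ℚ) / (e q : ℚ) : ℚ) : WithTop ℚ) := by
    intro q hq x z hz
    have := (hw x).1 q hq
    rwa [hz, WithTop.map_coe] at this
  have w_ex : ∀ x : K, x ≠ 0 → ∃ q ∈ P, ∃ z : ℤ, v q x = (z : WithTop ℤ) ∧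
      w x = (((z : ℚ) / (e q : ℚ) : ℚ) : WithTop ℚ) := by
    intro x hx
    obtain ⟨q, hq, h⟩ := (hw x).2
    have hvne : v q x ≠ ⊤ := S14.v_ne_top (v q) (hv_top q hq) (hv_mul q hq) hx
    obtain ⟨z, hz⟩ := WithTop.ne_top_iff_exists.mp hvne
    exact ⟨q, hq, z, hz.symm, by rw [h, ← hz, WithTop.map_coe]⟩
  have hwfin : ∀ x : K, x ≠ 0 → ∃ r : ℚ, w x = (r : WithTop ℚ) := by
    intro x hx
    obtain ⟨q, hq, z, _, h⟩ := w_ex x hx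
    exact ⟨_, h⟩
  have w_min : ∀ x y : K, min (w x) (w y) ≤ w (x + y) := by
    intro x y
    obtain ⟨q, hq, hxy⟩ := (hw (x + y)).2
    rw [hxy]
    have hm := hv_min q hq x y
    rcases le_total (v q x) (v q y) with h | h
    · calc min (w x) (w y) ≤ w x := min_le_left _ _
        _ ≤ (v q x).map _ := (hw x).1 q hq
        _ ≤ (v q (x + y)).map _ := hmono q hq _ _ ((min_eq_left h) ▸ hm)
    · calc min (w x) (w y) ≤ w y := min_le_right _ _
        _ ≤ (v q y).map _ := (hw y).1 q hq
        _ ≤ (v q (x + y)).map _ := hmono q hq _ _ ((min_eq_right h) ▸ hm)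
  have w_sum : ∀ (s : Finset (Fin m)) (f : Fin m → K),
      (s.inf fun i => w (f i)) ≤ w (∑ i ∈ s, f i) := by
    intro s f
    induction s using Finset.cons_induction with
    | empty => simp [hw0]
    | cons a s ha ih =>
      rw [Finset.sum_cons, Finset.inf_cons]
      calc w (f a) ⊓ s.inf (fun i => w (f i)) ≤ w (f a) ⊓ w (∑ i ∈ s, f i) :=
            inf_le_inf_left _ ih
        _ ≤ w (f a + ∑ i ∈ s, f i) := w_min _ _
  have w_ratmul : ∀ c : ℚ, c ≠ 0 → ∀ x : K, x ≠ 0 →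
      w ((c : K) * x) = ((padicValRat p c : ℚ) : WithTop ℚ) + w x := by
    intro c hc x hx
    have hcx : (c : K) * x ≠ 0 := mul_ne_zero (Rat.cast_ne_zero.mpr hc) hx
    have key : ∀ q ∈ P, ∀ z : ℤ, v q x = (z : WithTop ℤ) →
        v q ((c : K) * x) = (((e q : ℤ) * padicValRat p c + z : ℤ) : WithTop ℤ) := by
      intro q hq z hz
      rw [hv_mul q hq, hvrat q hq c hc, hz, ← WithTop.coe_add]
    apply le_antisymm
    · obtain ⟨q, hq, z, hz, hwx⟩ := w_ex x hx
      have h1 := w_le_q q hq ((c : K) * x) _ (key q hq z hz)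
      rw [hwx, ← WithTop.coe_add]
      refine h1.trans_eq ?_
      rw [WithTop.coe_inj]
      have he' : (0 : ℚ) < (e q : ℚ) := by exact_mod_cast e_pos q hq
      push_cast
      field_simp
    · obtain ⟨q, hq, z, hz, hwcx⟩ := w_ex ((c : K) * x) hcx
      have hvxne : v q x ≠ ⊤ := S14.v_ne_top (v q) (hv_top q hq) (hv_mul q hq) hx
      obtain ⟨z', hz'⟩ := WithTop.ne_top_iff_exists.mp hvxne
      have hkey := key q hq z' hz'.symm
      have hzz : (z : ℚ) = (e q : ℚ) * (padicValRat p c : ℚ) + (z' : ℚ) := by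
        exact_mod_cast (hz.symm.trans hkey)
      have hwxle := w_le_q q hq x z' hz'.symm
      rw [hwcx]
      calc ((padicValRat p c : ℚ) : WithTop ℚ) + w x
          ≤ ((padicValRat p c : ℚ) : WithTop ℚ) + (((z' : ℚ) / (e q : ℚ) : ℚ) : WithTop ℚ) :=
            add_le_add le_rfl hwxle
        _ = (((z : ℚ) / (e q : ℚ) : ℚ) : WithTop ℚ) := by
            rw [← WithTop.coe_add, WithTop.coe_inj]
            have he' : (0 : ℚ) < (e q : ℚ) := by exact_mod_cast e_pos q hq
            rw [hzz]
            field_simp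
  have hπ0 : ∀ q ∈ P, π q ≠ 0 := by
    intro q hq h
    have h2 := hπ q hq
    rw [h, (hv_top q hq 0).mpr rfl] at h2
    exact absurd h2.symm (by simp)
  have hval_shift : ∀ q ∈ P, ∀ n : ℤ, 0 ≤ n → ∀ x : K, ∀ z : ℤ,
      v q (x * π q ^ (-n)) = (z : WithTop ℤ) → v q x = ((z + n : ℤ) : WithTop ℤ) := by
    intro q hq n hn x z hz
    have hxeq : x = (x * π q ^ (-n)) * π q ^ n.toNat := by
      rw [mul_assoc, ← zpow_natCast (π q) n.toNat, ← zpow_add₀ (hπ0 q hq), Int.toNat_of_nonneg hn]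
      simp
    have h1 : v q (π q) = ((1 : ℤ) : WithTop ℤ) := by rw [hπ q hq]; rfl
    have hπpow : v q (π q ^ n.toNat) = ((n : ℤ) : WithTop ℤ) := by
      rw [S14.v_pow (v q) (hv_top q hq) (hv_mul q hq) h1 n.toNat]
      have : ((n.toNat : ℤ) * 1 : ℤ) = n := by omega
      rw [this]
    conv_lhs => rw [hxeq]
    rw [hv_mul q hq, hz, hπpow, ← WithTop.coe_add]
  have hvalint_nonneg : ∀ z : ℤ, 0 ≤ padicValRat p ((z : ℤ) : ℚ) := by
    intro z
    rw [padicValRat.of_int]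
    exact_mod_cast Int.natCast_nonneg _
  have hndvd_ord : ∀ z : ℤ, ¬ (p : ℤ) ∣ z → padicValRat p ((z : ℤ) : ℚ) = 0 := by
    intro z hz
    rw [padicValRat.of_int]
    have hnd : ¬ p ∣ z.natAbs := by
      intro h
      exact hz (Int.natAbs_dvd_natAbs.mp (by simpa [Int.natAbs_natCast] using h))
    have : padicValInt p z = padicValNat p z.natAbs := rfl
    rw [this, padicValNat.eq_zero_of_not_dvd hnd]
    rfl
  constructor
  · -- reduced → independence
    intro hred δ hδ c hc i0 hi0
    by_contra hndvd
    have hδ0 : 0 ≤ δ := by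
      have h1 := (hw01 i0).1
      rw [hi0] at h1
      exact_mod_cast h1
    have hc0 : c i0 ≠ 0 := by intro h; rw [h] at hndvd; exact hndvd (dvd_zero _)
    have hc0' : ((c i0 : ℤ) : ℚ) ≠ 0 := Int.cast_ne_zero.mpr hc0
    set B := Finset.univ.filter (fun i => w (α i) = ((δ : ℚ) : WithTop ℚ)) with hB
    have hi0B : i0 ∈ B := Finset.mem_filter.mpr ⟨Finset.mem_univ _, hi0⟩
    set a : Fin m → ℚ := fun i => if w (α i) = ((δ : ℚ) : WithTop ℚ) then ((c i : ℤ) : ℚ) else 0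
      with haa
    have ha : ∀ i, 0 ≤ padicValRat p (a i) := by
      intro i
      by_cases h : w (α i) = ((δ : ℚ) : WithTop ℚ)
      · rw [haa]; simp only [if_pos h]; exact hvalint_nonneg _
      · rw [haa]; simp only [if_neg h]; rw [padicValRat.zero]
    have hred' := hred a ha
    have hsum : ∑ i, a i • α i = ∑ i ∈ B, (c i : K) * α i := by
      rw [hB, Finset.sum_filter]
      apply Finset.sum_congr rfl
      intro i _
      by_cases h : w (α i) = ((δ : ℚ) : WithTop ℚ) <;>
        simp [haa, h, Rat.smul_def]
    have hordc : padicValRat p ((c i0 : ℤ) : ℚ) = 0 := hndvd_ord _ hndvd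
    have hinf : (Finset.univ.inf fun i => w (a i • α i)) = ((δ : ℚ) : WithTop ℚ) := by
      apply le_antisymm
      · refine (Finset.inf_le (Finset.mem_univ i0)).trans_eq ?_
        rw [Rat.smul_def, haa]
        simp only [if_pos hi0]
        rw [w_ratmul _ hc0' _ (hα0 i0), hordc, hi0, ← WithTop.coe_add]
        norm_num
      · apply Finset.le_inf
        intro i _
        by_cases h : w (α i) = ((δ : ℚ) : WithTop ℚ)
        · by_cases hci : c i = 0
          · rw [haa]; simp only [if_pos h, hci]
            simp [hw0]
          · rw [Rat.smul_def, haa]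
            simp only [if_pos h]
            rw [w_ratmul _ (Int.cast_ne_zero.mpr hci) _ (hα0 i), h, ← WithTop.coe_add,
              WithTop.coe_le_coe]
            have h2 : (0 : ℚ) ≤ ((padicValRat p ((c i : ℤ) : ℚ)) : ℚ) := by
              exact_mod_cast hvalint_nonneg (c i)
            linarith
        · rw [haa]; simp only [if_neg h, zero_smul, hw0]
          exact le_top
    rw [hsum, hinf] at hred'
    set S := ∑ i ∈ B, (c i : K) * α i with hS
    have hS0 : S ≠ 0 := by
      intro h
      rw [h, hw0] at hred'
      exact (WithTop.coe_ne_top hred'.symm)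
    obtain ⟨q, hq, z, hz, hwS⟩ := w_ex S hS0
    have hδz : δ = (z : ℚ) / (e q : ℚ) := WithTop.coe_inj.mp (hred'.symm.trans hwS)
    have hpos := hc q hq
    set n := ⌊(e q : ℚ) * δ⌋ with hn
    have hn0 : 0 ≤ n := Int.floor_nonneg.mpr (by positivity)
    have hT : (∑ i ∈ B, (c i : K) * (α i * π q ^ (-n))) = S * π q ^ (-n) := by
      rw [hS, Finset.sum_mul]
      exact Finset.sum_congr rfl fun i _ => (mul_assoc _ _ _).symm
    rw [hT] at hpos
    have hTne : S * π q ^ (-n) ≠ 0 := mul_ne_zero hS0 (zpow_ne_zero _ (hπ0 q hq))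
    have hvTne : v q (S * π q ^ (-n)) ≠ ⊤ :=
      S14.v_ne_top (v q) (hv_top q hq) (hv_mul q hq) hTne
    obtain ⟨zT, hzT⟩ := WithTop.ne_top_iff_exists.mp hvTne
    have hshift := hval_shift q hq n hn0 S zT hzT.symm
    have hzeq : z = zT + n := by exact_mod_cast hz.symm.trans hshift
    have hzT1 : 0 < zT := by
      rw [← hzT] at hpos
      exact_mod_cast hpos
    have hlt : (e q : ℚ) * δ < (z : ℚ) := by
      have h1 : ((e q : ℚ) * δ) < (n : ℚ) + 1 := Int.lt_floor_add_one _
      have h2 : (n : ℚ) + 1 ≤ (z : ℚ) := by exact_mod_cast (by omega : n + 1 ≤ z)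
      linarith
    have hepos : (0 : ℚ) < (e q : ℚ) := by exact_mod_cast e_pos q hq
    rw [hδz] at hlt
    rw [mul_comm, div_mul_cancel₀ _ hepos.ne'] at hlt
    exact lt_irrefl _ hlt
  · -- independence → reduced
    intro hind a ha
    have w_neg : ∀ x : K, w (-x) = w x := by
      intro x
      by_cases hx : x = 0
      · rw [hx, neg_zero]
      · have h := w_ratmul (-1) (by norm_num) x hx
        rw [show (((-1 : ℚ) : K)) * x = -x by push_cast; ring] at h
        have hval : padicValRat p (-1) = 0 := by
          rw [show (-1 : ℚ) = -(1 : ℚ) by norm_num, padicValRat.neg, padicValRat.one]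
        rw [h, hval]
        simp
    refine le_antisymm ?_ (w_sum Finset.univ fun i => a i • α i)
    by_contra hlt0
    have hlt : (Finset.univ.inf fun i => w (a i • α i)) < w (∑ i, a i • α i) :=
      not_le.mp hlt0
    have hne : (Finset.univ : Finset (Fin m)).Nonempty := by
      rcases Finset.eq_empty_or_nonempty (Finset.univ : Finset (Fin m)) with h | h
      · rw [h, Finset.inf_empty] at hlt
        exact absurd hlt not_top_lt
      · exact h
    obtain ⟨j, -, hj⟩ := Finset.exists_mem_eq_inf Finset.univ hne (fun i => w (a i • α i))
    have hinfne : w (a j • α j) ≠ ⊤ := by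
      intro h
      rw [hj, h] at hlt
      exact not_top_lt hlt
    have haj : a j ≠ 0 := by
      intro h
      rw [h, zero_smul, hw0] at hinfne
      exact hinfne rfl
    choose ρ hρ using fun i => hwfin (α i) (hα0 i)
    have hρ0 : ∀ i, 0 ≤ ρ i := by
      intro i
      have h1 := (hw01 i).1
      rw [hρ i] at h1
      exact_mod_cast h1
    have hρ1 : ∀ i, ρ i < 1 := by
      intro i
      have h1 := (hw01 i).2
      rw [hρ i] at h1
      exact_mod_cast h1
    have hwterm : ∀ i, a i ≠ 0 →
        w (a i • α i) = (((padicValRat p (a i) : ℚ) + ρ i : ℚ) : WithTop ℚ) := by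
      intro i hai
      rw [Rat.smul_def, w_ratmul _ hai _ (hα0 i), hρ i, ← WithTop.coe_add]
    have hμ : (Finset.univ.inf fun i => w (a i • α i)) =
        (((padicValRat p (a j) : ℚ) + ρ j : ℚ) : WithTop ℚ) := by
      rw [hj, hwterm j haj]
    have htt0 : 0 ≤ padicValRat p (a j) := ha j
    have hmin : ∀ i, (((padicValRat p (a j) : ℚ) + ρ j : ℚ) : WithTop ℚ) ≤ w (a i • α i) := by
      intro i
      rw [← hμ]
      exact Finset.inf_le (Finset.mem_univ i)
    have hkey : ∀ i, a i ≠ 0 →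
        (padicValRat p (a i) : ℚ) + ρ i = (padicValRat p (a j) : ℚ) + ρ j →
        (padicValRat p (a i) = padicValRat p (a j) ∧ ρ i = ρ j) := by
      intro i hai hsum
      have h2 : ((padicValRat p (a i) - padicValRat p (a j) : ℤ) : ℚ) = ρ j - ρ i := by
        push_cast
        linarith
      have h3 : (-1 : ℚ) < ((padicValRat p (a i) - padicValRat p (a j) : ℤ) : ℚ) := by
        rw [h2]
        linarith [hρ0 i, hρ1 i, hρ0 j, hρ1 j]
      have h4 : ((padicValRat p (a i) - padicValRat p (a j) : ℤ) : ℚ) < 1 := by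
        rw [h2]
        linarith [hρ0 i, hρ1 i, hρ0 j, hρ1 j]
      have h5 : -1 < padicValRat p (a i) - padicValRat p (a j) := by exact_mod_cast h3
      have h6 : padicValRat p (a i) - padicValRat p (a j) < 1 := by exact_mod_cast h4
      have h7 : padicValRat p (a i) = padicValRat p (a j) := by omega
      refine ⟨h7, ?_⟩
      have : ((padicValRat p (a i) : ℤ) : ℚ) = ((padicValRat p (a j) : ℤ) : ℚ) := by
        exact_mod_cast h7
      linarith
    have hBc : ∀ i, ¬ (w (α i) = ((ρ j : ℚ) : WithTop ℚ)) →
        (((padicValRat p (a j) : ℚ) + ρ j : ℚ) : WithTop ℚ) < w (a i • α i) := by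
      intro i hi
      by_cases hai : a i = 0
      · rw [hai, zero_smul, hw0]
        exact WithTop.coe_lt_top _
      · have hne2 : ρ i ≠ ρ j := by
          intro h
          exact hi (by rw [hρ i, h])
        rw [hwterm i hai, WithTop.coe_lt_coe]
        have h5 := hmin i
        rw [hwterm i hai, WithTop.coe_le_coe] at h5
        rcases lt_or_eq_of_le h5 with h | h
        · exact h
        · exact absurd ((hkey i hai h.symm).2) hne2
    have hsplit := Finset.sum_filter_add_sum_filter_not Finset.univ
      (fun i => w (α i) = ((ρ j : ℚ) : WithTop ℚ)) (fun i => a i • α i)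
    have hwR : (((padicValRat p (a j) : ℚ) + ρ j : ℚ) : WithTop ℚ) <
        w (∑ i ∈ Finset.univ.filter (fun i => ¬ (w (α i) = ((ρ j : ℚ) : WithTop ℚ))),
          a i • α i) := by
      refine lt_of_lt_of_le ?_ (w_sum _ _)
      rw [Finset.lt_inf_iff (WithTop.coe_lt_top _)]
      intro i hi'
      exact hBc i (Finset.mem_filter.mp hi').2
    rw [hμ] at hlt
    have hwS : (((padicValRat p (a j) : ℚ) + ρ j : ℚ) : WithTop ℚ) <
        w (∑ i ∈ Finset.univ.filter (fun i => w (α i) = ((ρ j : ℚ) : WithTop ℚ)),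
          a i • α i) := by
      have hSeq : (∑ i ∈ Finset.univ.filter (fun i => w (α i) = ((ρ j : ℚ) : WithTop ℚ)),
          a i • α i) = (∑ i, a i • α i) +
          (-(∑ i ∈ Finset.univ.filter (fun i => ¬ (w (α i) = ((ρ j : ℚ) : WithTop ℚ))),
            a i • α i)) := by
        rw [← hsplit]
        ring
      rw [hSeq]
      refine lt_of_lt_of_le (lt_min hlt ?_) (w_min _ _)
      rw [w_neg]
      exact hwR
    -- construct the integer coefficients
    have hpt0 : ((p ^ (padicValRat p (a j)).toNat : ℕ) : ℚ) ≠ 0 := by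
      exact_mod_cast pow_ne_zero _ hp.pos.ne'
    have hptval : padicValRat p ((p ^ (padicValRat p (a j)).toNat : ℕ) : ℚ)
        = padicValRat p (a j) := by
      push_cast
      rw [padicValRat.pow _, padicValRat.self hp.one_lt]
      rw [mul_one, Int.toNat_of_nonneg htt0]
    set pt : ℕ := p ^ (padicValRat p (a j)).toNat with hptdef
    set r : Fin m → ℚ := fun i => a i / pt with hr
    have hrval : ∀ i, a i ≠ 0 → padicValRat p (r i) = padicValRat p (a i) - padicValRat p (a j) := by
      intro i hai
      rw [hr]
      simp only
      rw [padicValRat.div hai hpt0, hptval]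
    have htle : ∀ i, a i ≠ 0 → w (α i) = ((ρ j : ℚ) : WithTop ℚ) →
        padicValRat p (a j) ≤ padicValRat p (a i) := by
      intro i hai hiw
      have hiB' : ρ i = ρ j := by
        have h6 := (hρ i).symm.trans hiw
        exact_mod_cast h6
      have h5 := hmin i
      rw [hwterm i hai, WithTop.coe_le_coe, hiB'] at h5
      have h8 : ((padicValRat p (a j) : ℤ) : ℚ) ≤ ((padicValRat p (a i) : ℤ) : ℚ) := by
        linarith
      exact_mod_cast h8
    have hrden : ∀ i ∈ Finset.univ.filter (fun i => w (α i) = ((ρ j : ℚ) : WithTop ℚ)),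
        ¬ p ∣ (r i).den := by
      intro i hiB
      by_cases hai : a i = 0
      · rw [hr]
        simp only [hai, zero_div]
        simp [Nat.Prime.ne_one hp]
      · intro hdvd
        have hrne : r i ≠ 0 := by
          rw [hr]; exact div_ne_zero hai hpt0
        have hord : 0 ≤ padicValRat p (r i) := by
          rw [hrval i hai]
          have := htle i hai (Finset.mem_filter.mp hiB).2
          omega
        have hnum : ¬ p ∣ (r i).num.natAbs := by
          intro h
          have hcop := (r i).reduced
          exact hp.ne_one (Nat.dvd_one.mp (hcop ▸ Nat.dvd_gcd h hdvd))
        have h1 : padicValInt p (r i).num = 0 := by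
          simp [padicValInt, padicValNat.eq_zero_of_not_dvd hnum]
        have h2 : 1 ≤ padicValNat p (r i).den :=
          one_le_padicValNat_of_dvd (r i).den_nz hdvd
        have h9 : padicValRat p (r i) = padicValInt p (r i).num - padicValNat p (r i).den := rfl
        rw [h9, h1] at hord
        omega
    set D : ℕ := ∏ i ∈ Finset.univ.filter (fun i => w (α i) = ((ρ j : ℚ) : WithTop ℚ)),
      (r i).den with hD
    have hD0 : D ≠ 0 := by
      rw [hD]
      intro h
      obtain ⟨i, -, hi⟩ := Finset.prod_eq_zero_iff.mp h
      exact (r i).den_nz hi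
    have hpD : ¬ p ∣ D := by
      intro h
      rw [hD] at h
      obtain ⟨i, hiB, hdvd⟩ := (hp.prime.dvd_finset_prod_iff _).mp h
      exact hrden i hiB hdvd
    set c : Fin m → ℤ := fun i => (r i).num * ((D / (r i).den : ℕ) : ℤ) with hcdef
    have hcast : ∀ i ∈ Finset.univ.filter (fun i => w (α i) = ((ρ j : ℚ) : WithTop ℚ)),
        ((c i : ℤ) : ℚ) = r i * (D : ℚ) := by
      intro i hiB
      have hdvd : (r i).den ∣ D := by rw [hD]; exact Finset.dvd_prod_of_mem _ hiB
      have hden0 : ((r i).den : ℚ) ≠ 0 := Nat.cast_ne_zero.mpr (r i).den_nz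
      have hre : (((r i).num : ℤ) : ℚ) = r i * ((r i).den : ℚ) :=
        (div_eq_iff hden0).mp (Rat.num_div_den (r i))
      simp only [hcdef]
      rw [Int.cast_mul, Int.cast_natCast, Nat.cast_div hdvd hden0]
      field_simp
      rw [hre]
      ring
    have hDQ0 : ((D : ℕ) : ℚ) ≠ 0 := Nat.cast_ne_zero.mpr hD0
    have hDval : padicValRat p ((D : ℕ) : ℚ) = 0 := by
      have h1 := hndvd_ord (D : ℤ) (by
        intro h
        exact hpD (Int.natCast_dvd_natCast.mp h))
      push_cast at h1 ⊢
      exact h1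
    have hjB : j ∈ Finset.univ.filter (fun i => w (α i) = ((ρ j : ℚ) : WithTop ℚ)) :=
      Finset.mem_filter.mpr ⟨Finset.mem_univ j, hρ j⟩
    have hrj : r j ≠ 0 := by rw [hr]; exact div_ne_zero haj hpt0
    have hcj0 : c j ≠ 0 := by
      intro h
      have h2 := hcast j hjB
      rw [h] at h2
      have h3 : r j * (D : ℚ) = 0 := by exact_mod_cast h2.symm
      rcases mul_eq_zero.mp h3 with h4 | h4
      · exact hrj h4
      · exact hDQ0 h4
    have hordcj : padicValRat p ((c j : ℤ) : ℚ) = 0 := by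
      rw [hcast j hjB, padicValRat.mul hrj hDQ0, hrval j haj, hDval]
      simp
    have hpcj : ¬ (p : ℤ) ∣ c j := by
      intro h
      have h2 : p ∣ (c j).natAbs := by
        rw [← Int.natAbs_natCast p]
        exact Int.natAbs_dvd_natAbs.mpr h
      have h3 : 1 ≤ padicValNat p (c j).natAbs :=
        one_le_padicValNat_of_dvd (Int.natAbs_ne_zero.mpr hcj0) h2
      rw [padicValRat.of_int] at hordcj
      have h4 : padicValInt p (c j) = 0 := by exact_mod_cast hordcj
      have h5 : padicValInt p (c j) = padicValNat p (c j).natAbs := rfl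
      omega
    refine hpcj (hind (ρ j) ⟨j, hρ j⟩ c ?_ j (hρ j))
    intro q hq
    have hδ0 : 0 ≤ ρ j := hρ0 j
    have hn0 : 0 ≤ ⌊(e q : ℚ) * ρ j⌋ := Int.floor_nonneg.mpr (by positivity)
    have hTsum : (∑ i ∈ Finset.univ.filter (fun i => w (α i) = ((ρ j : ℚ) : WithTop ℚ)),
        (c i : K) * (α i * π q ^ (-⌊(e q : ℚ) * ρ j⌋))) =
        ((((D : ℚ) / (pt : ℚ)) : ℚ) : K) *
          (∑ i ∈ Finset.univ.filter (fun i => w (α i) = ((ρ j : ℚ) : WithTop ℚ)), a i • α i) *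
          π q ^ (-⌊(e q : ℚ) * ρ j⌋) := by
      rw [Finset.mul_sum, Finset.sum_mul]
      apply Finset.sum_congr rfl
      intro i hiB
      have h2 : ((c i : ℤ) : ℚ) = ((D : ℚ) / (pt : ℚ)) * a i := by
        rw [hcast i hiB, hr]
        simp only
        ring
      have h3 : ((c i : ℤ) : K) = ((((D : ℚ) / (pt : ℚ)) * a i : ℚ) : K) := by
        rw [← h2]
        push_cast
        ring
      rw [h3, Rat.cast_mul, Rat.smul_def]
      ring
    rw [hTsum]
    by_cases hSz : (∑ i ∈ Finset.univ.filter (fun i => w (α i) = ((ρ j : ℚ) : WithTop ℚ)),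
        a i • α i) = 0
    · rw [hSz, mul_zero, zero_mul, (hv_top q hq 0).mpr rfl]
      simpa using WithTop.coe_lt_top (0 : ℤ)
    · have hu0 : ((D : ℚ) / (pt : ℚ)) ≠ 0 := div_ne_zero hDQ0 hpt0
      have huK0 : ((((D : ℚ) / (pt : ℚ)) : ℚ) : K) ≠ 0 := Rat.cast_ne_zero.mpr hu0
      have hT0 : ((((D : ℚ) / (pt : ℚ)) : ℚ) : K) *
          (∑ i ∈ Finset.univ.filter (fun i => w (α i) = ((ρ j : ℚ) : WithTop ℚ)), a i • α i) *
          π q ^ (-⌊(e q : ℚ) * ρ j⌋) ≠ 0 :=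
        mul_ne_zero (mul_ne_zero huK0 hSz) (zpow_ne_zero _ (hπ0 q hq))
      obtain ⟨zT, hzT⟩ := WithTop.ne_top_iff_exists.mp
        (S14.v_ne_top (v q) (hv_top q hq) (hv_mul q hq) hT0)
      have hshift := hval_shift q hq _ hn0 _ zT hzT.symm
      obtain ⟨zS, hzS⟩ := WithTop.ne_top_iff_exists.mp
        (S14.v_ne_top (v q) (hv_top q hq) (hv_mul q hq) hSz)
      have hordu : padicValRat p ((D : ℚ) / (pt : ℚ)) = -(padicValRat p (a j)) := by
        rw [padicValRat.div hDQ0 hpt0, hptval, hDval]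
        ring
      have hcomb : v q (((((D : ℚ) / (pt : ℚ)) : ℚ) : K) *
          (∑ i ∈ Finset.univ.filter (fun i => w (α i) = ((ρ j : ℚ) : WithTop ℚ)), a i • α i)) =
          (((e q : ℤ) * (-(padicValRat p (a j))) + zS : ℤ) : WithTop ℤ) := by
        rw [hv_mul q hq, hvrat q hq _ hu0, hordu, ← hzS, ← WithTop.coe_add]
      have hzTeq : zT + ⌊(e q : ℚ) * ρ j⌋ = (e q : ℤ) * (-(padicValRat p (a j))) + zS := by
        exact_mod_cast hshift.symm.trans hcomb
      have hwle := w_le_q q hq _ zS hzS.symm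
      have hlt2 : ((padicValRat p (a j) : ℚ) + ρ j) < (zS : ℚ) / (e q : ℚ) := by
        have h6 := lt_of_lt_of_le hwS hwle
        exact_mod_cast h6
      have hepos : (0 : ℚ) < (e q : ℚ) := by exact_mod_cast e_pos q hq
      have hzSgt : (e q : ℚ) * (padicValRat p (a j) : ℚ) + (e q : ℚ) * ρ j < (zS : ℚ) := by
        have h7 := (lt_div_iff₀ hepos).mp hlt2
        nlinarith
      have hfl : ((⌊(e q : ℚ) * ρ j⌋ : ℤ) : ℚ) ≤ (e q : ℚ) * ρ j := Int.floor_le _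
      have hzTpos : 0 < zT := by
        have h1' : ((zT + ⌊(e q : ℚ) * ρ j⌋ : ℤ) : ℚ)
            = (((e q : ℤ) * (-(padicValRat p (a j))) + zS : ℤ) : ℚ) := by
          exact_mod_cast congrArg (fun z : ℤ => (z : ℚ)) hzTeq
        push_cast at h1'
        have h2' : (0 : ℚ) < (zT : ℚ) := by linarith
        exact_mod_cast h2'
      rw [← hzT]
      exact_mod_cast hzTpos
end
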